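/- arXiv:math/0104178 — 3 statements merged into one kernel-verified Lean document; each statement's English description precedes it below -/
import Mathlib

section
/- Let R be a field and let q ∈ R be a primitive root of unity of order κ ≥ 1. Let M be a q-difference module over R(x); note that Φ_q^κ is R(x)-linear since φ_q^κ is the identity. Then Φ_q^κ = id_M if and only if M is trivial, i.e., there exists an R(x)-basis (e_1, …, e_μ) of M with Φ_q(e_i) = e_i for all i. -/
noncomputable section

variable {R : Type*} [Field R]

/-- The substitution `x ↦ qx` on rational functions (the automorphism `φ_q` of `R(x)`
when `q ≠ 0`). -/
def ratSubst (q : R) (f : RatFunc R) : RatFunc R :=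
  algebraMap (Polynomial R) (RatFunc R) (f.num.comp (Polynomial.C q * Polynomial.X)) /
    algebraMap (Polynomial R) (RatFunc R) (f.denom.comp (Polynomial.C q * Polynomial.X))

open Polynomial in
lemma ratSubst_comp_ne_zero {q : R} (hq : q ≠ 0) {p : R[X]} (hp : p ≠ 0) :
    p.comp (C q * X) ≠ 0 := by
  intro h
  apply hp
  have hcc : (C q * X : R[X]).comp (C q⁻¹ * X) = X := by
    rw [mul_comp, C_comp, X_comp, ← mul_assoc, ← C_mul, mul_inv_cancel₀ hq, C_1, one_mul]
  calc p = p.comp ((C q * X).comp (C q⁻¹ * X)) := by rw [hcc, comp_X]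
    _ = (p.comp (C q * X)).comp (C q⁻¹ * X) := (comp_assoc _ _ _).symm
    _ = 0 := by rw [h, zero_comp]

open Polynomial in
/-- The substitution `x ↦ qx` as an algebra homomorphism of `R(x)`. -/
def ratSubstHom (q : R) (hq : q ≠ 0) : RatFunc R →ₐ[R] RatFunc R :=
  RatFunc.liftAlgHom (Polynomial.aeval (algebraMap R[X] (RatFunc R) (C q * X)))
    (by
      intro p hp
      rw [mem_nonZeroDivisors_iff_ne_zero] at hp
      rw [Submonoid.mem_comap, mem_nonZeroDivisors_iff_ne_zero,
        Polynomial.aeval_algebraMap_apply, ← comp_eq_aeval]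
      exact RatFunc.algebraMap_ne_zero (ratSubst_comp_ne_zero hq hp))

open Polynomial in
lemma ratSubstHom_algebraMap (q : R) (hq : q ≠ 0) (p : R[X]) :
    ratSubstHom q hq (algebraMap R[X] (RatFunc R) p)
      = algebraMap R[X] (RatFunc R) (p.comp (C q * X)) := by
  have h := RatFunc.liftAlgHom_apply_div
    (φ := Polynomial.aeval (algebraMap R[X] (RatFunc R) (C q * X)))
    (hφ := by
      intro p hp
      rw [mem_nonZeroDivisors_iff_ne_zero] at hp
      rw [Submonoid.mem_comap, mem_nonZeroDivisors_iff_ne_zero,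
        Polynomial.aeval_algebraMap_apply, ← comp_eq_aeval]
      exact RatFunc.algebraMap_ne_zero (ratSubst_comp_ne_zero hq hp)) p 1
  rw [map_one, div_one, map_one, div_one] at h
  rw [ratSubstHom, h, Polynomial.aeval_algebraMap_apply, ← comp_eq_aeval]

open Polynomial in
lemma ratSubst_eq_ratSubstHom (q : R) (hq : q ≠ 0) (f : RatFunc R) :
    ratSubst q f = ratSubstHom q hq f := by
  conv_rhs => rw [← RatFunc.num_div_denom f]
  rw [map_div₀, ratSubstHom_algebraMap, ratSubstHom_algebraMap, ratSubst]

open Polynomial in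
lemma ratSubstHom_X (q : R) (hq : q ≠ 0) :
    ratSubstHom q hq RatFunc.X = algebraMap R (RatFunc R) q * RatFunc.X := by
  rw [← RatFunc.algebraMap_X, ratSubstHom_algebraMap, X_comp, map_mul, RatFunc.algebraMap_X,
    ← Polynomial.algebraMap_eq, ← IsScalarTower.algebraMap_apply R R[X] (RatFunc R)]

open Polynomial in
lemma ratFunc_algHom_ext {f g : RatFunc R →ₐ[R] RatFunc R}
    (h : f RatFunc.X = g RatFunc.X) : f = g := by
  have hring : (f : RatFunc R →+* RatFunc R).comp (algebraMap R[X] (RatFunc R))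
      = (g : RatFunc R →+* RatFunc R).comp (algebraMap R[X] (RatFunc R)) := by
    apply Polynomial.ringHom_ext
    · intro a
      simp only [RingHom.coe_comp, Function.comp_apply]
      rw [← Polynomial.algebraMap_eq, ← IsScalarTower.algebraMap_apply R R[X] (RatFunc R) a]
      exact (f.commutes a).trans (g.commutes a).symm
    · simp only [RingHom.coe_comp, Function.comp_apply, RatFunc.algebraMap_X]
      exact h
  have := IsLocalization.ringHom_ext (nonZeroDivisors R[X]) hring
  exact AlgHom.ext fun x => RingHom.congr_fun this x

open Polynomial in
lemma ratSubstHom_pow_X (q : R) (hq : q ≠ 0) (n : ℕ) :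
    ((ratSubstHom q hq) ^ n) RatFunc.X = algebraMap R (RatFunc R) (q ^ n) * RatFunc.X := by
  induction n with
  | zero => simp
  | succ n ih =>
    rw [pow_succ', AlgHom.mul_apply, ih, map_mul, ratSubstHom_X, AlgHom.commutes]
    rw [pow_succ', map_mul]
    ring

open Polynomial in
lemma ratSubstHom_pow_kappa (q : R) (hq : q ≠ 0) (κ : ℕ) (hqκ : q ^ κ = 1) :
    (ratSubstHom q hq) ^ κ = 1 := by
  apply ratFunc_algHom_ext
  rw [ratSubstHom_pow_X, hqκ, map_one, one_mul, AlgHom.one_apply]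

set_option maxHeartbeats 1000000 in
set_option synthInstance.maxHeartbeats 400000 in
/-- For `q` a primitive root of unity of order `κ`, a `q`-difference module over `R(x)`
is trivial iff `Φ_q^κ` is the identity. -/
theorem q_difference_module_trivial_iff_phi_pow_kappa_eq_id
    {R : Type*} [Field R] (q : R) (κ : ℕ) (hκpos : 0 < κ)
    (hqκ : q ^ κ = 1) (hqmin : ∀ m : ℕ, 0 < m → m < κ → q ^ m ≠ 1)
    (M : Type*) [AddCommGroup M] [Module (RatFunc R) M] [FiniteDimensional (RatFunc R) M]
    (Φ : M → M) (hΦbij : Function.Bijective Φ)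
    (hΦadd : ∀ m m' : M, Φ (m + m') = Φ m + Φ m')
    (hΦsemi : ∀ (f : RatFunc R) (m : M), Φ (f • m) = ratSubst q f • Φ m) :
    (∀ m : M, Φ^[κ] m = m) ↔
      ∃ (n : ℕ) (b : Module.Basis (Fin n) (RatFunc R) M), ∀ i : Fin n, Φ (b i) = b i := by
  have hq0 : q ≠ 0 := by
    intro h
    rw [h, zero_pow hκpos.ne'] at hqκ
    exact zero_ne_one hqκ
  set σ : RatFunc R →ₐ[R] RatFunc R := ratSubstHom q hq0 with hσdef
  have hΦσ : ∀ (f : RatFunc R) (m : M), Φ (f • m) = σ f • Φ m := fun f m => by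
    rw [hΦsemi, ratSubst_eq_ratSubstHom q hq0, hσdef]
  have hσκ : ∀ f : RatFunc R, (σ ^ κ) f = f := fun f => by
    rw [hσdef, ratSubstHom_pow_kappa q hq0 κ hqκ, AlgHom.one_apply]
  have hiter_smul : ∀ (n : ℕ) (f : RatFunc R) (m : M),
      Φ^[n] (f • m) = (σ ^ n) f • Φ^[n] m := by
    intro n
    induction n with
    | zero => intro f m; simp
    | succ n ih =>
      intro f m
      rw [Function.iterate_succ_apply', Function.iterate_succ_apply', ih, hΦσ,
        pow_succ', AlgHom.mul_apply]
  have hiter_add : ∀ (n : ℕ) (m m' : M), Φ^[n] (m + m') = Φ^[n] m + Φ^[n] m' := by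
    intro n
    induction n with
    | zero => intro m m'; simp
    | succ n ih =>
      intro m m'
      rw [Function.iterate_succ_apply', Function.iterate_succ_apply',
        Function.iterate_succ_apply', ih, hΦadd]
  constructor
  · -- forward direction
    intro hid
    set T : Set M := {m : M | Φ m = m} with hT
    have hΦsum : ∀ (s : Finset ℕ) (g : ℕ → M), Φ (∑ i ∈ s, g i) = ∑ i ∈ s, Φ (g i) :=
      fun s g => map_sum (AddMonoidHom.mk' Φ hΦadd) g s
    have hfixed : ∀ (c : RatFunc R) (m : M),
        (∑ i ∈ Finset.range κ, (σ ^ i) c • Φ^[i] m) ∈ T := by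
      intro c m
      set g : ℕ → M := fun i => (σ ^ i) c • Φ^[i] m with hgdef
      have hgκ : g κ = g 0 := by
        rw [hgdef]
        simp only [pow_zero, AlgHom.one_apply, Function.iterate_zero, id_eq]
        rw [hσκ, hid]
      show Φ (∑ i ∈ Finset.range κ, g i) = ∑ i ∈ Finset.range κ, g i
      rw [hΦsum]
      have hstep : ∀ i : ℕ, Φ (g i) = g (i + 1) := by
        intro i
        rw [hgdef]
        simp only
        rw [hΦσ, pow_succ', AlgHom.mul_apply, Function.iterate_succ_apply']
      have h1 := Finset.sum_range_succ' g κ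
      have h2 := Finset.sum_range_succ g κ
      have h3 := h1.symm.trans h2
      rw [hgκ] at h3
      calc ∑ i ∈ Finset.range κ, Φ (g i) = ∑ i ∈ Finset.range κ, g (i + 1) :=
            Finset.sum_congr rfl fun i _ => hstep i
        _ = ∑ i ∈ Finset.range κ, g i := add_right_cancel h3
    have hqinj : ∀ i j : ℕ, i < j → j < κ → q ^ i ≠ q ^ j := by
      intro i j hij hj h
      apply hqmin (j - i) (by omega) (by omega)
      have : q ^ (j - i) * q ^ i = 1 * q ^ i := by
        rw [one_mul, ← pow_add, Nat.sub_add_cancel hij.le, ← h]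
      exact mul_right_cancel₀ (pow_ne_zero i hq0) this
    have hspan : Submodule.span (RatFunc R) T = ⊤ := by
      by_contra hne
      obtain ⟨lam, hlam0, hlam⟩ :=
        Submodule.exists_dual_map_eq_bot_of_lt_top (p := Submodule.span (RatFunc R) T)
          (lt_top_iff_ne_top.mpr hne) inferInstance
      have hlz : ∀ x ∈ Submodule.span (RatFunc R) T, lam x = 0 := by
        intro x hx
        have hmem : lam x ∈ (Submodule.span (RatFunc R) T).map lam :=
          Submodule.mem_map_of_mem hx
        rwa [hlam, Submodule.mem_bot] at hmem
      have hrel : ∀ (m : M) (c : RatFunc R),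
          ∑ i ∈ Finset.range κ, lam (Φ^[i] m) * (σ ^ i) c = 0 := by
        intro m c
        have h0 : lam (∑ i ∈ Finset.range κ, (σ ^ i) c • Φ^[i] m) = 0 :=
          hlz _ (Submodule.subset_span (hfixed c m))
        rw [map_sum] at h0
        simp only [map_smul, smul_eq_mul] at h0
        rw [← h0]
        exact Finset.sum_congr rfl fun i _ => mul_comm _ _
      let χ : Fin κ → (RatFunc R →* RatFunc R) :=
        fun i => ((σ ^ (i : ℕ)).toRingHom : RatFunc R →+* RatFunc R).toMonoidHom
      have hχinj : Function.Injective χ := by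
        intro i j hij
        have hX : (σ ^ (i : ℕ)) RatFunc.X = (σ ^ (j : ℕ)) RatFunc.X :=
          DFunLike.congr_fun hij RatFunc.X
        rw [hσdef, ratSubstHom_pow_X, ratSubstHom_pow_X] at hX
        have h2 : algebraMap R (RatFunc R) (q ^ (i : ℕ)) = algebraMap R (RatFunc R) (q ^ (j : ℕ)) :=
          mul_right_cancel₀ RatFunc.X_ne_zero hX
        have h3 : q ^ (i : ℕ) = q ^ (j : ℕ) := (algebraMap R (RatFunc R)).injective h2
        rcases lt_trichotomy (i : ℕ) (j : ℕ) with h | h | h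
        · exact absurd h3 (hqinj _ _ h j.isLt)
        · exact Fin.ext h
        · exact absurd h3.symm (hqinj _ _ h i.isLt)
      have hli : LinearIndependent (RatFunc R)
          ((fun (f : RatFunc R →* RatFunc R) => ⇑f) ∘ χ) :=
        (linearIndependent_monoidHom (RatFunc R) (RatFunc R)).comp χ hχinj
      apply hlam0
      apply LinearMap.ext
      intro m
      rw [LinearMap.zero_apply]
      have hsum0 : ∑ i : Fin κ, lam (Φ^[(i : ℕ)] m) •
          ((fun (f : RatFunc R →* RatFunc R) => ⇑f) ∘ χ) i = 0 := by
        funext c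
        simp only [Finset.sum_apply, Pi.smul_apply, Function.comp_apply, smul_eq_mul,
          Pi.zero_apply]
        have := hrel m c
        rw [Finset.sum_range (fun i => lam (Φ^[i] m) * (σ ^ i) c)] at this
        exact this
      have hcoef := Fintype.linearIndependent_iff.mp hli
        (fun i => lam (Φ^[(i : ℕ)] m)) hsum0 ⟨0, hκpos⟩
      simpa using hcoef
    obtain ⟨t, hts, htspan, htli⟩ := exists_linearIndependent (RatFunc R) T
    rw [hspan] at htspan
    let b0 : Module.Basis t (RatFunc R) M :=
      Module.Basis.mk htli (by rw [Subtype.range_coe]; exact htspan.ge)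
    have : Fintype t := FiniteDimensional.fintypeBasisIndex b0
    refine ⟨Fintype.card t, b0.reindex (Fintype.equivFin t), fun i => ?_⟩
    rw [Module.Basis.reindex_apply, Module.Basis.mk_apply]
    exact hts ((Fintype.equivFin t).symm i).2
  · -- reverse direction
    rintro ⟨n, b, hb⟩ m
    let L : M →ₗ[RatFunc R] M :=
      { toFun := fun m => Φ^[κ] m
        map_add' := hiter_add κ
        map_smul' := fun f m => by
          simp only [RingHom.id_apply]
          rw [hiter_smul, hσκ] }
    have hL : L = LinearMap.id := by
      apply b.ext
      intro i
      show Φ^[κ] (b i) = b i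
      exact Function.iterate_fixed (hb i) κ
    have := LinearMap.congr_fun hL m
    exact this
end
end

section
/- Let R be a field and let q ∈ R be a primitive root of unity of order κ ≥ 1. Let M be a q-difference module over R(x); note that Φ_q^κ is R(x)-linear since φ_q^κ is the identity. Then Φ_q^κ is unipotent (i.e., Φ_q^κ − id_M is a nilpotent R(x)-linear endomorphism) if and only if M is an iterated extension of trivial q-difference modules: there exists a chain of Φ_q-stable R(x)-subspaces 0 = M_0 ⊆ M_1 ⊆ ⋯ ⊆ M_l = M such that for each i = 1, …, l the quotient M_i/M_{i−1}, with the operator induced by Φ_q, admits a basis of vectors fixed by the induced operator. -/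
set_option synthInstance.maxHeartbeats 1000000
set_option maxHeartbeats 1000000
noncomputable section
open Polynomial
variable {R : Type*} [Field R]

def polyComp (q : R) : R[X] →+* R[X] := (Polynomial.aeval (Polynomial.C q * Polynomial.X)).toRingHom

lemma polyComp_apply (q : R) (p : R[X]) : polyComp q p = p.comp (C q * X) := by
  simp [polyComp, Polynomial.aeval_def, Polynomial.comp, Polynomial.algebraMap_eq]

lemma polyComp_inj (q : R) (hq : q ≠ 0) : Function.Injective (polyComp q) := by
  intro p r h
  rw [polyComp_apply, polyComp_apply] at h
  have := congrArg (fun s => s.comp (C q⁻¹ * X)) h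
  simpa [Polynomial.comp_assoc, ← mul_assoc, ← Polynomial.C_mul,
    mul_inv_cancel₀ hq] using this

def φh (q : R) : R[X] →+* RatFunc R := (algebraMap R[X] (RatFunc R)).comp (polyComp q)

lemma φh_mem (q : R) (hq : q ≠ 0) :
    nonZeroDivisors R[X] ≤ Submonoid.comap (φh q) (nonZeroDivisors (RatFunc R)) := by
  intro p hp
  simp only [Submonoid.mem_comap]
  rw [mem_nonZeroDivisors_iff_ne_zero] at hp ⊢
  simp only [φh, RingHom.comp_apply]
  intro h
  apply hp
  apply polyComp_inj q hq
  rw [map_zero]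
  exact (map_eq_zero_iff _ (RatFunc.algebraMap_injective R)).mp h

def sig (q : R) (hq : q ≠ 0) : RatFunc R →+* RatFunc R := RatFunc.liftRingHom (φh q) (φh_mem q hq)

lemma ratSubst_eq (q : R) (hq : q ≠ 0) (f : RatFunc R) : ratSubst q f = sig q hq f := by
  rw [sig, RatFunc.liftRingHom_apply, ratSubst]
  simp [φh, polyComp_apply]

lemma sig_algebraMap (q : R) (hq : q ≠ 0) (p : R[X]) :
    sig q hq (algebraMap _ _ p) = algebraMap _ _ (p.comp (C q * X)) := by
  have := RatFunc.liftRingHom_apply_div (φh q) (φh_mem q hq) p 1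
  simp only [map_one, div_one] at this
  rw [sig, this]
  simp [φh, polyComp_apply]

section
variable (q q' : R) (hq : q ≠ 0) (hq' : q' ≠ 0)
lemma sig_comp (f : RatFunc R) : sig q hq (sig q' hq' f) = sig (q' * q) (by simp [hq, hq']) f := by
  conv_lhs => rw [← RatFunc.num_div_denom f]
  conv_rhs => rw [← RatFunc.num_div_denom f]
  rw [map_div₀, map_div₀, map_div₀, sig_algebraMap, sig_algebraMap, sig_algebraMap,
    sig_algebraMap, sig_algebraMap, sig_algebraMap]
  congr 2 <;>
  · rw [Polynomial.comp_assoc]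
    congr 1
    rw [Polynomial.mul_comp, Polynomial.C_comp, Polynomial.X_comp, ← mul_assoc, ← Polynomial.C_mul]

lemma sig_one (f : RatFunc R) : sig (1 : R) one_ne_zero f = f := by
  conv_rhs => rw [← RatFunc.num_div_denom f]
  rw [← RatFunc.num_div_denom f, map_div₀, sig_algebraMap, sig_algebraMap]
  simp

lemma sig_X : sig q hq RatFunc.X = algebraMap R[X] _ (C q * X) := by
  rw [← RatFunc.algebraMap_X, sig_algebraMap]
  simp

lemma sig_congr {a b : R} (h : a = b) (ha : a ≠ 0) (hb : b ≠ 0) (f : RatFunc R) :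
    sig a ha f = sig b hb f := by subst h; rfl

lemma sig_iter (k : ℕ) (f : RatFunc R) :
    (⇑(sig q hq))^[k] f = sig (q ^ k) (pow_ne_zero k hq) f := by
  induction k generalizing f with
  | zero => simp [sig_congr (pow_zero q) (pow_ne_zero 0 hq) one_ne_zero, sig_one]
  | succ k ih =>
    rw [Function.iterate_succ_apply', ih, sig_comp]
    exact sig_congr (pow_succ q k).symm (by simp [pow_ne_zero, hq]) (pow_ne_zero _ hq) f

lemma sig_surj : Function.Surjective (fun f : RatFunc R => sig q hq f) := by
  intro f
  refine ⟨sig q⁻¹ (inv_ne_zero hq) f, ?_⟩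
  show sig q hq (sig q⁻¹ (inv_ne_zero hq) f) = f
  rw [sig_comp]
  rw [sig_congr (inv_mul_cancel₀ hq) (by simp [hq]) one_ne_zero, sig_one]

lemma sig_inj_of_ne {a b : R} (ha : a ≠ 0) (hb : b ≠ 0) (hab : a ≠ b)
    : sig a ha ≠ sig b hb := by
  intro h
  apply hab
  have := congrArg (fun g : RatFunc R →+* RatFunc R => g RatFunc.X) h
  simp only [sig_X] at this
  have h2 := RatFunc.algebraMap_injective R this
  have := congrArg (fun p : R[X] => p.coeff 1) h2
  simpa using this

end

section PhiFacts
variable {M : Type*} [AddCommGroup M] [Module (RatFunc R) M] (Φ : M → M)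

lemma phi_zero (hadd : ∀ a b : M, Φ (a + b) = Φ a + Φ b) : Φ 0 = 0 := by
  have h := hadd 0 0
  rw [add_zero] at h
  exact (add_eq_left (a := Φ 0)).mp h.symm

lemma iter_add (hadd : ∀ a b : M, Φ (a + b) = Φ a + Φ b) (k : ℕ) (a b : M) :
    Φ^[k] (a + b) = Φ^[k] a + Φ^[k] b := by
  induction k generalizing a b with
  | zero => simp
  | succ k ih => simp only [Function.iterate_succ_apply', ih, hadd]

lemma iter_zero (hadd : ∀ a b : M, Φ (a + b) = Φ a + Φ b) (k : ℕ) : Φ^[k] (0 : M) = 0 := by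
  induction k with
  | zero => simp
  | succ k ih => simp only [Function.iterate_succ_apply', ih, phi_zero Φ hadd]

lemma iter_sub (hadd : ∀ a b : M, Φ (a + b) = Φ a + Φ b) (k : ℕ) (a b : M) :
    Φ^[k] (a - b) = Φ^[k] a - Φ^[k] b := by
  have h := iter_add Φ hadd k (a - b) b
  rw [sub_add_cancel] at h
  rw [h]; abel

lemma iter_sum (hadd : ∀ a b : M, Φ (a + b) = Φ a + Φ b) (k : ℕ) {ι : Type*}
    (s : Finset ι) (g : ι → M) : Φ^[k] (∑ j ∈ s, g j) = ∑ j ∈ s, Φ^[k] (g j) := by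
  classical
  induction s using Finset.induction_on with
  | empty => simpa using iter_zero Φ hadd k
  | insert _ _ hne ih =>
    rw [Finset.sum_insert hne, Finset.sum_insert hne, iter_add Φ hadd, ih]

lemma iter_smul (σ : RatFunc R →+* RatFunc R)
    (hsemi : ∀ (f : RatFunc R) (m : M), Φ (f • m) = σ f • Φ m) (k : ℕ)
    (f : RatFunc R) (m : M) : Φ^[k] (f • m) = (⇑σ)^[k] f • Φ^[k] m := by
  induction k generalizing f m with
  | zero => simp
  | succ k ih =>
    rw [Function.iterate_succ_apply', Function.iterate_succ_apply', ih, hsemi,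
      Function.iterate_succ_apply']

end PhiFacts

section Fixed
variable {M : Type*} [AddCommGroup M] [Module (RatFunc R) M] [FiniteDimensional (RatFunc R) M]

lemma exists_fixed (κ : ℕ) (hκ : 0 < κ) (σ : RatFunc R →+* RatFunc R) (Φ : M → M)
    (hadd : ∀ a b : M, Φ (a + b) = Φ a + Φ b)
    (hsemi : ∀ (f : RatFunc R) (m : M), Φ (f • m) = σ f • Φ m)
    (T : ℕ → (RatFunc R →+* RatFunc R)) (hT : ∀ i f, (⇑σ)^[i] f = T i f)
    (hTinj : ∀ i j, i < κ → j < κ → T i = T j → i = j)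
    (hσκ : ∀ f, (⇑σ)^[κ] f = f)
    (u : M) (hu : u ≠ 0) (hfix : Φ^[κ] u = u) :
    ∃ v : M, v ≠ 0 ∧ Φ v = v := by
  set w : RatFunc R → M := fun a => ∑ i ∈ Finset.range κ, (⇑σ)^[i] a • Φ^[i] u with hw
  have hΦw : ∀ a, Φ (w a) = w a := by
    intro a
    have h1 : Φ (w a) = ∑ i ∈ Finset.range κ, (⇑σ)^[i + 1] a • Φ^[i + 1] u := by
      have h2 := iter_sum Φ hadd 1 (Finset.range κ) (fun i => (⇑σ)^[i] a • Φ^[i] u)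
      simp only [Function.iterate_one] at h2
      rw [hw, h2]
      refine Finset.sum_congr rfl fun i _ => ?_
      rw [hsemi, ← Function.iterate_succ_apply' (⇑σ), ← Function.iterate_succ_apply' Φ]
    rw [h1]
    have e1 := Finset.sum_range_succ' (fun i => (⇑σ)^[i] a • Φ^[i] u) κ
    have e2 := Finset.sum_range_succ (fun i => (⇑σ)^[i] a • Φ^[i] u) κ
    have e3 : (⇑σ)^[κ] a • Φ^[κ] u = (⇑σ)^[0] a • Φ^[0] u := by
      simp [hσκ, hfix]
    rw [e2, e3] at e1
    simpa [hw] using add_right_cancel e1.symm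
  by_cases hall : ∀ a, w a = 0
  · exfalso
    apply hu
    rw [← Module.forall_dual_apply_eq_zero_iff (RatFunc R)]
    intro lam
    set G : Fin κ → (RatFunc R →* RatFunc R) := fun i => (T (i : ℕ)).toMonoidHom with hG
    have hGinj : Function.Injective G := by
      intro i j hij
      refine Fin.ext (hTinj i j i.isLt j.isLt (RingHom.ext fun x => ?_))
      exact DFunLike.congr_fun hij x
    have li := (linearIndependent_monoidHom (RatFunc R) (RatFunc R)).comp G hGinj
    have hrel : ∑ i : Fin κ, (lam (Φ^[(i : ℕ)] u)) •
        (((fun f : RatFunc R →* RatFunc R => (f : RatFunc R → RatFunc R)) ∘ G) i) = 0 := by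
      funext a
      have h0 : lam (w a) = 0 := by rw [hall a, map_zero]
      rw [hw] at h0
      simp only [map_sum, map_smul, smul_eq_mul] at h0
      simp only [Finset.sum_apply, Pi.smul_apply, Function.comp_apply, smul_eq_mul,
        Pi.zero_apply, hG]
      have hconv : ∀ x : Fin κ, lam (Φ^[(x : ℕ)] u) * ((T (x : ℕ) : RatFunc R →* RatFunc R) a)
          = (⇑σ)^[(x : ℕ)] a * lam (Φ^[(x : ℕ)] u) := by
        intro x
        rw [mul_comm]
        congr 1
        exact (hT _ _).symm
      exact (Finset.sum_congr rfl fun x _ => hconv x).trans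
        ((Finset.sum_range fun i => (⇑σ)^[i] a * lam (Φ^[i] u)).symm.trans h0)
    have hzero := Fintype.linearIndependent_iff.mp li _ hrel
    have h00 := hzero ⟨0, hκ⟩
    simpa using h00
  · push_neg at hall
    obtain ⟨a, ha⟩ := hall
    exact ⟨w a, ha, hΦw a⟩

end Fixed

section Reverse
variable {M : Type*} [AddCommGroup M] [Module (RatFunc R) M]

lemma iter_mem (Φ : M → M) (p : Submodule (RatFunc R) M) (hstab : ∀ m ∈ p, Φ m ∈ p)
    (k : ℕ) (m : M) (hm : m ∈ p) : Φ^[k] m ∈ p := by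
  induction k with
  | zero => simpa using hm
  | succ k ih => rw [Function.iterate_succ_apply']; exact hstab _ ih

lemma reverse_dir (κ : ℕ) (σ : RatFunc R →+* RatFunc R) (Φ : M → M)
    (hadd : ∀ a b : M, Φ (a + b) = Φ a + Φ b)
    (hsemi : ∀ (f : RatFunc R) (m : M), Φ (f • m) = σ f • Φ m)
    (hσκ : ∀ f, (⇑σ)^[κ] f = f)
    (l : ℕ) (W : ℕ → Submodule (RatFunc R) M) (hW0 : W 0 = ⊥) (hWl : W l = ⊤)
    (hstab : ∀ i : ℕ, ∀ m ∈ W i, Φ m ∈ W i)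
    (hquot : ∀ i < l, ∃ (n : ℕ) (v : Fin n → M),
          (∀ j, v j ∈ W (i + 1)) ∧
          (∀ j, Φ (v j) - v j ∈ W i) ∧
          (∀ m ∈ W (i + 1), ∃ (c : Fin n → RatFunc R) (w : M),
            w ∈ W i ∧ m = w + ∑ j, c j • v j) ∧
          (∀ c : Fin n → RatFunc R, (∑ j, c j • v j) ∈ W i → ∀ j, c j = 0)) :
    ∀ m : M, (fun x : M => Φ^[κ] x - x)^[l] m = 0 := by
  set D : M → M := fun x : M => Φ^[κ] x - x with hD
  have key : ∀ i : ℕ, i ≤ l → ∀ m ∈ W i, D^[i] m = 0 := by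
    intro i
    induction i with
    | zero =>
      intro _ m hm
      rw [hW0] at hm
      simpa using hm
    | succ i ih =>
      intro hil m hm
      obtain ⟨n, v, hv1, hv2, hspan, hind⟩ := hquot i (Nat.lt_of_succ_le hil)
      obtain ⟨c, w, hwWi, rfl⟩ := hspan m hm
      have hDv : ∀ (j : Fin n) (k : ℕ), Φ^[k] (v j) - v j ∈ W i := by
        intro j k
        induction k with
        | zero => simpa using (W i).zero_mem
        | succ k ihk =>
          have h1 : Φ^[k+1] (v j) - v j = (Φ (v j) - v j) + Φ (Φ^[k] (v j) - v j) := by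
            rw [Function.iterate_succ_apply']
            have : Φ^[k] (v j) = v j + (Φ^[k] (v j) - v j) := by abel
            rw [this, hadd]
            abel
          rw [h1]
          exact (W i).add_mem (hv2 j) (hstab i _ ihk)
      have hDm : D (w + ∑ j, c j • v j) ∈ W i := by
        have hexp : D (w + ∑ j, c j • v j)
            = (Φ^[κ] w - w) + ∑ j, c j • (Φ^[κ] (v j) - v j) := by
          rw [hD]
          simp only
          rw [iter_add Φ hadd, iter_sum Φ hadd]
          have : ∀ j : Fin n, Φ^[κ] (c j • v j) = c j • Φ^[κ] (v j) := by
            intro j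
            rw [iter_smul Φ σ hsemi, hσκ]
          rw [Finset.sum_congr rfl fun j _ => this j]
          simp only [smul_sub]
          rw [Finset.sum_sub_distrib]
          abel
        rw [hexp]
        exact (W i).add_mem
          ((W i).sub_mem (iter_mem Φ (W i) (hstab i) κ w hwWi) hwWi)
          ((W i).sum_mem fun j _ => (W i).smul_mem _ (hDv j κ))
      rw [Function.iterate_succ_apply]
      exact ih (Nat.le_of_succ_le hil) _ hDm
  intro m
  exact key l le_rfl m (by rw [hWl]; trivial)

end Reverse
section Forward

universe v

lemma forward_dir (q : R) (κ : ℕ) (hκpos : 0 < κ) (hqκ : q ^ κ = 1)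
    (hqmin : ∀ m : ℕ, 0 < m → m < κ → q ^ m ≠ 1) :
    ∀ (n : ℕ) (M : Type v) [AddCommGroup M] [Module (RatFunc R) M]
      [FiniteDimensional (RatFunc R) M], Module.finrank (RatFunc R) M = n →
      ∀ (Φ : M → M), Function.Bijective Φ →
      (∀ a b : M, Φ (a + b) = Φ a + Φ b) →
      (∀ (f : RatFunc R) (m : M), Φ (f • m) = ratSubst q f • Φ m) →
      (∃ N : ℕ, ∀ m : M, (fun x : M => Φ^[κ] x - x)^[N] m = 0) →
      ∃ (l : ℕ) (W : ℕ → Submodule (RatFunc R) M),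
        W 0 = ⊥ ∧ W l = ⊤ ∧ (∀ i : ℕ, W i ≤ W (i + 1)) ∧
        (∀ i : ℕ, ∀ m ∈ W i, Φ m ∈ W i) ∧
        ∀ i < l, ∃ (n : ℕ) (v : Fin n → M),
          (∀ j, v j ∈ W (i + 1)) ∧
          (∀ j, Φ (v j) - v j ∈ W i) ∧
          (∀ m ∈ W (i + 1), ∃ (c : Fin n → RatFunc R) (w : M),
            w ∈ W i ∧ m = w + ∑ j, c j • v j) ∧
          (∀ c : Fin n → RatFunc R, (∑ j, c j • v j) ∈ W i → ∀ j, c j = 0) := by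
  have hq : q ≠ 0 := by
    intro h
    rw [h, zero_pow hκpos.ne'] at hqκ
    exact zero_ne_one hqκ
  intro n
  induction n using Nat.strong_induction_on with
  | _ n IH =>
  intro M _ _ _ hrank Φ hbij hadd hsemiR hnil
  set σ := sig q hq with hσ
  have hsemi : ∀ (f : RatFunc R) (m : M), Φ (f • m) = σ f • Φ m := by
    intro f m
    rw [hsemiR, ratSubst_eq q hq]
  have hσiter : ∀ (k : ℕ) (f : RatFunc R),
      (⇑σ)^[k] f = sig (q ^ k) (pow_ne_zero k hq) f := fun k f => sig_iter q hq k f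
  have hσκ : ∀ f : RatFunc R, (⇑σ)^[κ] f = f := by
    intro f
    rw [hσiter, sig_congr hqκ (pow_ne_zero κ hq) one_ne_zero, sig_one]
  rcases Nat.eq_zero_or_pos n with hn | hn
  · -- trivial module
    subst hn
    haveI : Subsingleton M := by
      rw [← Module.finrank_zero_iff (R := RatFunc R)]
      exact hrank
    refine ⟨0, fun _ => ⊥, rfl, Subsingleton.elim _ _, fun i => le_rfl, ?_, ?_⟩
    · intro i m hm
      have hm0 : m = 0 := by simpa using hm
      have : Φ 0 = 0 := phi_zero Φ hadd
      simp [hm0, this]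
    · intro i hi
      exact absurd hi (Nat.not_lt_zero i)
  · -- nontrivial: find a fixed vector
    haveI : Nontrivial M :=
      Module.nontrivial_of_finrank_pos (R := RatFunc R) (by rw [hrank]; exact hn)
    obtain ⟨m0, hm0⟩ := exists_ne (0 : M)
    obtain ⟨N, hN⟩ := hnil
    set D : M → M := fun x : M => Φ^[κ] x - x with hD
    classical
    have hPN : D^[N] m0 = 0 := hN m0
    have hex : ∃ k, D^[k] m0 = 0 := ⟨N, hPN⟩
    set k := Nat.find hex with hk
    have hkspec : D^[k] m0 = 0 := Nat.find_spec hex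
    have hkpos : 0 < k := by
      rcases Nat.eq_zero_or_pos k with h0 | h0
      · exfalso
        apply hm0
        have := hkspec
        rw [h0] at this
        simpa using this
      · exact h0
    set u : M := D^[k - 1] m0 with hu
    have hune : u ≠ 0 := Nat.find_min hex (Nat.sub_lt hkpos one_pos)
    have hufix : Φ^[κ] u = u := by
      have h1 : D u = 0 := by
        rw [hu, ← Function.iterate_succ_apply' D, Nat.succ_eq_add_one, Nat.sub_add_cancel hkpos]
        exact hkspec
      have : Φ^[κ] u - u = 0 := h1
      rwa [sub_eq_zero] at this
    -- distinctness family
    have hTinj : ∀ i j, i < κ → j < κ →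
        sig (q ^ i) (pow_ne_zero i hq) = sig (q ^ j) (pow_ne_zero j hq) → i = j := by
      have key : ∀ i j, i < j → j < κ →
          sig (q ^ i) (pow_ne_zero i hq) ≠ sig (q ^ j) (pow_ne_zero j hq) := by
        intro i j hij hjκ h
        have hne : q ^ i ≠ q ^ j := by
          intro he
          have h2 : q ^ i * q ^ (j - i) = q ^ i * 1 := by
            rw [mul_one, ← pow_add, Nat.add_sub_cancel' hij.le]
            exact he.symm
          have h3 : q ^ (j - i) = 1 := mul_left_cancel₀ (pow_ne_zero i hq) h2
          exact hqmin (j - i) (Nat.sub_pos_of_lt hij) (lt_of_le_of_lt (Nat.sub_le j i) hjκ) h3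
        exact sig_inj_of_ne (pow_ne_zero i hq) (pow_ne_zero j hq) hne h
      intro i j hiκ hjκ h
      rcases lt_trichotomy i j with hlt | heq | hgt
      · exact absurd h (key i j hlt hjκ)
      · exact heq
      · exact absurd h.symm (key j i hgt hiκ)
    obtain ⟨v, hv0, hΦv⟩ := exists_fixed κ hκpos σ Φ hadd hsemi
      (fun i => sig (q ^ i) (pow_ne_zero i hq)) hσiter hTinj hσκ u hune hufix
    -- span of the fixed vector and quotient
    have hvp : v ∈ Submodule.span (RatFunc R) {v} := Submodule.mem_span_singleton_self v
    set p : Submodule (RatFunc R) M := Submodule.span (RatFunc R) {v} with hp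
    have hstabp : ∀ m ∈ p, Φ m ∈ p := by
      intro m hm
      obtain ⟨c, rfl⟩ := Submodule.mem_span_singleton.mp hm
      rw [hsemi, hΦv]
      exact p.smul_mem _ hvp
    have hstabp' : ∀ m, Φ m ∈ p → m ∈ p := by
      intro m hm
      obtain ⟨c, hc⟩ := Submodule.mem_span_singleton.mp hm
      obtain ⟨c', rfl⟩ := sig_surj q hq c
      have hΦeq : Φ (c' • v) = Φ m := by rw [hsemi, hΦv]; exact hc
      have := hbij.injective hΦeq
      rw [← this]
      exact p.smul_mem c' hvp
    have hsub1 : ∀ a b : M, Φ (a - b) = Φ a - Φ b := by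
      intro a b
      have := iter_sub Φ hadd 1 a b
      simpa using this
    have hmkout : ∀ x : M ⧸ p, Submodule.Quotient.mk (Quotient.out x) = x := by
      intro x
      rw [← Submodule.Quotient.mk''_eq_mk]
      exact Quotient.out_eq' x
    set Φ' : (M ⧸ p) → (M ⧸ p) := fun x => Submodule.Quotient.mk (Φ (Quotient.out x)) with hΦ'
    have hmk : ∀ m : M, Φ' (Submodule.Quotient.mk m) = Submodule.Quotient.mk (Φ m) := by
      intro m
      rw [hΦ']
      simp only
      rw [Submodule.Quotient.eq, ← hsub1]
      apply hstabp
      rw [← Submodule.Quotient.eq, hmkout]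
    have hsurjmk := Submodule.Quotient.mk_surjective p
    have hadd' : ∀ a b : M ⧸ p, Φ' (a + b) = Φ' a + Φ' b := by
      intro a b
      obtain ⟨a, rfl⟩ := hsurjmk a
      obtain ⟨b, rfl⟩ := hsurjmk b
      rw [← Submodule.Quotient.mk_add, hmk, hmk, hmk, hadd, Submodule.Quotient.mk_add]
    have hsemi' : ∀ (f : RatFunc R) (x : M ⧸ p), Φ' (f • x) = ratSubst q f • Φ' x := by
      intro f x
      obtain ⟨a, rfl⟩ := hsurjmk x
      rw [← Submodule.Quotient.mk_smul, hmk, hmk, hsemiR, Submodule.Quotient.mk_smul]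
    have hbij' : Function.Bijective Φ' := by
      constructor
      · intro x y hxy
        obtain ⟨a, rfl⟩ := hsurjmk x
        obtain ⟨b, rfl⟩ := hsurjmk y
        rw [hmk, hmk, Submodule.Quotient.eq, ← hsub1] at hxy
        rw [Submodule.Quotient.eq]
        exact hstabp' _ hxy
      · intro y
        obtain ⟨b, rfl⟩ := hsurjmk y
        obtain ⟨a, rfl⟩ := hbij.surjective b
        exact ⟨Submodule.Quotient.mk a, hmk a⟩
    have hiter' : ∀ (j : ℕ) (m : M),
        Φ'^[j] (Submodule.Quotient.mk m) = Submodule.Quotient.mk (Φ^[j] m) := by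
      intro j
      induction j with
      | zero => intro m; simp
      | succ j ih =>
        intro m
        rw [Function.iterate_succ_apply', Function.iterate_succ_apply', ih, hmk]
    have hnil' : ∃ N : ℕ, ∀ x : M ⧸ p, (fun y : M ⧸ p => Φ'^[κ] y - y)^[N] x = 0 := by
      refine ⟨N, ?_⟩
      have hDmk : ∀ (j : ℕ) (m : M),
          (fun y : M ⧸ p => Φ'^[κ] y - y)^[j] (Submodule.Quotient.mk m)
            = Submodule.Quotient.mk (D^[j] m) := by
        intro j
        induction j with
        | zero => intro m; simp
        | succ j ih =>
          intro m
          rw [Function.iterate_succ_apply, Function.iterate_succ_apply]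
          have h1 : Φ'^[κ] (Submodule.Quotient.mk m) - Submodule.Quotient.mk m
              = Submodule.Quotient.mk (D m) := by
            rw [hiter', hD, Submodule.Quotient.mk_sub]
          rw [h1, ih]
      intro x
      obtain ⟨m, rfl⟩ := hsurjmk x
      rw [hDmk, hN m, Submodule.Quotient.mk_zero]
    have hrankQ : Module.finrank (RatFunc R) (M ⧸ p) < n := by
      have h1 := Submodule.finrank_quotient_add_finrank p
      have h2 : Module.finrank (RatFunc R) p = 1 := by
        rw [hp]
        exact finrank_span_singleton hv0
      rw [hrank, h2] at h1
      omega
    obtain ⟨l', W', hW'0, hW'l, hW'mono, hW'stab, hW'quot⟩ :=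
      IH _ hrankQ (M ⧸ p) rfl Φ' hbij' hadd' hsemi' hnil'
    refine ⟨l' + 1, fun i => Nat.casesOn i ⊥ (fun j => Submodule.comap p.mkQ (W' j)),
      rfl, ?_, ?_, ?_, ?_⟩
    · show Submodule.comap p.mkQ (W' l') = ⊤
      rw [hW'l, Submodule.comap_top]
    · intro i
      cases i with
      | zero => exact bot_le
      | succ i => exact Submodule.comap_mono (hW'mono i)
    · intro i m hm
      cases i with
      | zero =>
        have hm0 : m = 0 := by simpa using hm
        have h0 : Φ m = 0 := by rw [hm0, phi_zero Φ hadd]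
        show Φ m ∈ (⊥ : Submodule (RatFunc R) M)
        simp [h0]
      | succ i =>
        have hm' : p.mkQ m ∈ W' i := hm
        show Φ m ∈ Submodule.comap p.mkQ (W' i)
        rw [Submodule.mem_comap]
        have heq : p.mkQ (Φ m) = Φ' (p.mkQ m) := by
          rw [Submodule.mkQ_apply, Submodule.mkQ_apply, hmk]
        rw [heq]
        exact hW'stab i _ hm'
    · intro i hi
      cases i with
      | zero =>
        refine ⟨1, fun _ => v, ?_, ?_, ?_, ?_⟩
        · intro j
          show v ∈ Submodule.comap p.mkQ (W' 0)
          rw [Submodule.mem_comap, hW'0, Submodule.mem_bot, Submodule.mkQ_apply,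
            Submodule.Quotient.mk_eq_zero]
          exact hvp
        · intro j
          show Φ v - v ∈ (⊥ : Submodule (RatFunc R) M)
          rw [hΦv, sub_self]
          exact Submodule.zero_mem _
        · intro m hm
          have hm' : p.mkQ m ∈ W' 0 := hm
          rw [hW'0, Submodule.mem_bot, Submodule.mkQ_apply,
            Submodule.Quotient.mk_eq_zero] at hm'
          obtain ⟨c, hc⟩ := Submodule.mem_span_singleton.mp hm'
          refine ⟨fun _ => c, 0, Submodule.zero_mem _, ?_⟩
          rw [Fin.sum_univ_one, zero_add]
          exact hc.symm
        · intro c hc j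
          have hmem : (∑ j : Fin 1, c j • v) ∈ (⊥ : Submodule (RatFunc R) M) := hc
          rw [Fin.sum_univ_one, Submodule.mem_bot] at hmem
          have hc0 := (smul_eq_zero.mp hmem).resolve_right hv0
          have hj : j = 0 := Subsingleton.elim j 0
          rw [hj]
          exact hc0
      | succ i =>
        have hi' : i < l' := by omega
        obtain ⟨nn, v', hv'1, hv'2, hspan', hind'⟩ := hW'quot i hi'
        choose uu huu using fun j => hsurjmk (v' j)
        have hmkuu : ∀ j, p.mkQ (uu j) = v' j := by
          intro j
          rw [Submodule.mkQ_apply, huu]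
        have hmksum : ∀ c : Fin nn → RatFunc R,
            p.mkQ (∑ j, c j • uu j) = ∑ j, c j • v' j := by
          intro c
          rw [map_sum]
          exact Finset.sum_congr rfl fun j _ => by rw [map_smul, hmkuu]
        refine ⟨nn, uu, ?_, ?_, ?_, ?_⟩
        · intro j
          show uu j ∈ Submodule.comap p.mkQ (W' (i + 1))
          rw [Submodule.mem_comap, hmkuu]
          exact hv'1 j
        · intro j
          show Φ (uu j) - uu j ∈ Submodule.comap p.mkQ (W' i)
          rw [Submodule.mem_comap, map_sub]
          have h1 : p.mkQ (Φ (uu j)) = Φ' (v' j) := by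
            rw [Submodule.mkQ_apply, ← huu j, hmk]
          rw [h1, hmkuu]
          exact hv'2 j
        · intro m hm
          have hm' : Submodule.Quotient.mk m ∈ W' (i + 1) := by
            have := Submodule.mem_comap.mp hm
            rwa [Submodule.mkQ_apply] at this
          obtain ⟨c, w', hw', heq⟩ := hspan' _ hm'
          refine ⟨c, m - ∑ j, c j • uu j, ?_, by abel⟩
          show m - ∑ j, c j • uu j ∈ Submodule.comap p.mkQ (W' i)
          rw [Submodule.mem_comap, map_sub, hmksum, Submodule.mkQ_apply, heq]
          have hcalc : w' + (∑ j, c j • v' j) - ∑ j, c j • v' j = w' := by abel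
          rw [hcalc]
          exact hw'
        · intro c hc j
          apply hind' c _ j
          have hc' := Submodule.mem_comap.mp hc
          rwa [hmksum] at hc'


end Forward

/-- For `q` a primitive root of unity of order `κ`, `Φ_q^κ` is unipotent iff the
`q`-difference module is an iterated extension of trivial `q`-difference modules. -/
theorem q_difference_module_unipotent_iff_iterated_extension_of_trivial
    {R : Type*} [Field R] (q : R) (κ : ℕ) (hκpos : 0 < κ)
    (hqκ : q ^ κ = 1) (hqmin : ∀ m : ℕ, 0 < m → m < κ → q ^ m ≠ 1)
    (M : Type*) [AddCommGroup M] [Module (RatFunc R) M] [FiniteDimensional (RatFunc R) M]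
    (Φ : M → M) (hΦbij : Function.Bijective Φ)
    (hΦadd : ∀ m m' : M, Φ (m + m') = Φ m + Φ m')
    (hΦsemi : ∀ (f : RatFunc R) (m : M), Φ (f • m) = ratSubst q f • Φ m) :
    (∃ N : ℕ, ∀ m : M, (fun x : M => Φ^[κ] x - x)^[N] m = 0) ↔
      ∃ (l : ℕ) (W : ℕ → Submodule (RatFunc R) M),
        W 0 = ⊥ ∧ W l = ⊤ ∧ (∀ i : ℕ, W i ≤ W (i + 1)) ∧
        (∀ i : ℕ, ∀ m ∈ W i, Φ m ∈ W i) ∧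
        ∀ i < l, ∃ (n : ℕ) (v : Fin n → M),
          (∀ j, v j ∈ W (i + 1)) ∧
          (∀ j, Φ (v j) - v j ∈ W i) ∧
          (∀ m ∈ W (i + 1), ∃ (c : Fin n → RatFunc R) (w : M),
            w ∈ W i ∧ m = w + ∑ j, c j • v j) ∧
          (∀ c : Fin n → RatFunc R, (∑ j, c j • v j) ∈ W i → ∀ j, c j = 0) := by
  have hq : q ≠ 0 := by
    intro h
    rw [h, zero_pow hκpos.ne'] at hqκ
    exact zero_ne_one hqκ
  constructor
  · intro hnil
    exact forward_dir q κ hκpos hqκ hqmin (Module.finrank (RatFunc R) M) M rfl Φ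
      hΦbij hΦadd hΦsemi hnil
  · rintro ⟨l, W, hW0, hWl, _hmono, hstab, hquot⟩
    have hsemi : ∀ (f : RatFunc R) (m : M), Φ (f • m) = sig q hq f • Φ m := by
      intro f m
      rw [hΦsemi, ratSubst_eq q hq]
    have hσκ : ∀ f : RatFunc R, (⇑(sig q hq))^[κ] f = f := by
      intro f
      rw [sig_iter, sig_congr hqκ (pow_ne_zero κ hq) one_ne_zero, sig_one]
    exact ⟨l, reverse_dir κ (sig q hq) Φ hΦadd hsemi hσκ l W hW0 hWl hstab hquot⟩
end
end

section
/- Let q ∈ ℂ^× not be a root of unity and let a, b, c ∈ ℂ be such that neither a = c = 0 nor b = c = 0. Consider the basic hypergeometric q-difference equation (H_{a,b,c}): (abx − cq^{−1})·y(q²x) − ((a+b)x − (1 + cq^{−1}))·y(qx) + (x − 1)·y(x) = 0, for y ∈ ℂ(x). Then (H_{a,b,c}) has two solutions in ℂ(x) that are linearly independent over ℂ if and only if the following conditions hold: there exist integers α, β, γ with a = q^α, b = q^β, c = q^γ; and, setting 𝒵 = (ℤ_{>0}×ℤ_{≤0}) ∪ (ℤ_{≤0}×ℤ_{>0}), one has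 ((α, α+1−γ) ∈ 𝒵 or (β, β+1−γ) ∈ 𝒵), and ((α, β) ∈ 𝒵 or (α+1−γ, β+1−γ) ∈ 𝒵). -/
noncomputable section

variable {R : Type*} [Field R]

/-- The basic hypergeometric `q`-difference equation `(H_{a,b,c})`. -/
def basicHypergeometricEq (q a b c : ℂ) (y : RatFunc ℂ) : Prop :=
  (RatFunc.C (a * b) * RatFunc.X - RatFunc.C (c * q⁻¹)) * ratSubst (q ^ 2) y
      - (RatFunc.C (a + b) * RatFunc.X - RatFunc.C (1 + c * q⁻¹)) * ratSubst q y
      + (RatFunc.X - 1) * y = 0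

/-- The set 𝒵 = (ℤ_{>0} × ℤ_{≤0}) ∪ (ℤ_{≤0} × ℤ_{>0}). -/
def zSet : Set (ℤ × ℤ) := {z | (0 < z.1 ∧ z.2 ≤ 0) ∨ (z.1 ≤ 0 ∧ 0 < z.2)}

namespace RatFunc

variable {F : Type*} [Field F]

def coeAlgHom (F : Type*) [Field F] : RatFunc F →+* LaurentSeries F :=
  algebraMap (RatFunc F) (LaurentSeries F)

theorem coe_def (f : RatFunc F) : (f : LaurentSeries F) = coeAlgHom F f := rfl

theorem coe_apply (f : RatFunc F) : coeAlgHom F f = (f : LaurentSeries F) := rfl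

theorem coe_injective : Function.Injective (algebraMap (RatFunc F) (LaurentSeries F)) :=
  (algebraMap (RatFunc F) (LaurentSeries F)).injective

theorem coe_zero : ((0 : RatFunc F) : LaurentSeries F) = 0 := map_zero _

theorem coe_one : ((1 : RatFunc F) : LaurentSeries F) = 1 := map_one _

theorem coe_add (f g : RatFunc F) : ((f + g : RatFunc F) : LaurentSeries F) = f + g :=
  map_add _ f g

theorem coe_sub (f g : RatFunc F) : ((f - g : RatFunc F) : LaurentSeries F) = f - g :=
  map_sub _ f g

theorem coe_mul (f g : RatFunc F) : ((f * g : RatFunc F) : LaurentSeries F) = f * g :=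
  map_mul _ f g

theorem coe_div (f g : RatFunc F) : ((f / g : RatFunc F) : LaurentSeries F) = f / g :=
  map_div₀ _ f g

theorem coe_C (r : F) : ((C r : RatFunc F) : LaurentSeries F) = HahnSeries.C r := by
  rw [← RatFunc.algebraMap_C, ← RatFunc.coePolynomial, ← RatFunc.coe_coe, Polynomial.coe_C,
    HahnSeries.ofPowerSeries_C]

theorem coe_smul (r : F) (f : RatFunc F) :
    ((r • f : RatFunc F) : LaurentSeries F) = r • (f : LaurentSeries F) := by
  rw [smul_eq_C_mul, coe_mul, coe_C, HahnSeries.C_mul_eq_smul]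

theorem coe_num_denom (f : RatFunc F) : (f : LaurentSeries F) =
    HahnSeries.ofPowerSeries ℤ F (f.num : PowerSeries F) /
      HahnSeries.ofPowerSeries ℤ F (f.denom : PowerSeries F) := by
  rw [coe_coe, coe_coe, ← map_div₀]
  congr 1
  exact (num_div_denom f).symm

end RatFunc

theorem HahnSeries.coeff_order_ne_zero {x : LaurentSeries ℂ} (hx : x ≠ 0) :
    x.coeff x.order ≠ 0 :=
  HahnSeries.coeff_order_eq_zero.not.mpr hx

namespace QHyp

open HahnSeries

abbrev LS := LaurentSeries ℂ

/-- coefficient-scaling operator: substitution x ↦ qx on Laurent series. -/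
def sig (q : ℂ) (f : LS) : LS :=
  ⟨fun n => q ^ n * f.coeff n, f.isPWO_support'.mono (by
    intro n hn
    simp only [Function.mem_support, ne_eq] at hn ⊢
    exact fun h => hn (by rw [h, mul_zero]))⟩

@[simp] lemma sig_coeff (q : ℂ) (f : LS) (n : ℤ) : (sig q f).coeff n = q ^ n * f.coeff n := rfl

lemma sig_add (q : ℂ) (f g : LS) : sig q (f + g) = sig q f + sig q g := by
  ext n; simp [mul_add]

lemma sig_sub (q : ℂ) (f g : LS) : sig q (f - g) = sig q f - sig q g := by
  ext n; simp [mul_sub]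

lemma sig_smul (q r : ℂ) (f : LS) : sig q (r • f) = r • sig q f := by
  ext n; simp [smul_eq_mul]; ring

lemma sig_one (q : ℂ) : sig q 1 = 1 := by
  ext n
  simp only [sig_coeff, HahnSeries.coeff_one]
  split_ifs with h <;> simp [h]

lemma sig_mul_single {q : ℂ} (hq0 : q ≠ 0) (f : LS) (k : ℤ) (c : ℂ) :
    sig q (f * single k c) = sig q f * single k (q ^ k * c) := by
  ext n
  have h : n = (n - k) + k := by ring
  rw [sig_coeff, h, HahnSeries.coeff_mul_single_add, HahnSeries.coeff_mul_single_add,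
    sig_coeff, zpow_add₀ hq0]
  ring

/-- Polynomials into Laurent series. -/
def toL (P : Polynomial ℂ) : LS := HahnSeries.ofPowerSeries ℤ ℂ (P : PowerSeries ℂ)

lemma toL_coeff (P : Polynomial ℂ) (i : ℤ) :
    (toL P).coeff i = if i < 0 then 0 else P.coeff i.natAbs := by
  rw [toL]
  erw [PowerSeries.coeff_coe]
  rw [Polynomial.coeff_coe]

lemma toL_coeff_natCast (P : Polynomial ℂ) (k : ℕ) : (toL P).coeff (k : ℤ) = P.coeff k := by
  rw [toL_coeff]
  simp

lemma toL_zero : toL 0 = 0 := by rw [toL, Polynomial.coe_zero]; exact map_zero _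

lemma toL_one : toL 1 = 1 := by rw [toL, Polynomial.coe_one]; exact map_one _

lemma toL_add (P Q : Polynomial ℂ) : toL (P + Q) = toL P + toL Q := by
  simp [toL, Polynomial.coe_add]

lemma toL_eq_zero_iff (P : Polynomial ℂ) : toL P = 0 ↔ P = 0 := by
  constructor
  · intro h
    ext k
    have := congrArg (fun f => HahnSeries.coeff f (k : ℤ)) h
    simp only [toL_coeff_natCast] at this
    simpa using this
  · rintro rfl; exact toL_zero

lemma toL_monomial (n : ℕ) (c : ℂ) : toL (Polynomial.monomial n c) = single (n : ℤ) c := by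
  ext i
  rw [toL_coeff, coeff_single, Polynomial.coeff_monomial]
  split_ifs with h1 h2 h3 <;> first | rfl | (exfalso; omega)

lemma monomial_comp_CqX (q : ℂ) (n : ℕ) (c : ℂ) :
    (Polynomial.monomial n c).comp (Polynomial.C q * Polynomial.X)
      = Polynomial.monomial n (c * q ^ n) := by
  rw [← Polynomial.C_mul_X_pow_eq_monomial, ← Polynomial.C_mul_X_pow_eq_monomial,
    Polynomial.mul_comp, Polynomial.C_comp, Polynomial.pow_comp, Polynomial.X_comp,
    mul_pow, ← Polynomial.C_pow, ← mul_assoc, ← Polynomial.C_mul]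

lemma sig_mul_toL {q : ℂ} (hq0 : q ≠ 0) (f : LS) (P : Polynomial ℂ) :
    sig q (f * toL P) = sig q f * toL (P.comp (Polynomial.C q * Polynomial.X)) := by
  induction P using Polynomial.induction_on' with
  | add p r hp hr =>
      rw [toL_add, mul_add, sig_add, hp, hr, Polynomial.add_comp, toL_add, mul_add]
  | monomial n c =>
      rw [toL_monomial, sig_mul_single hq0, monomial_comp_CqX, toL_monomial]
      rw [zpow_natCast]
      ring_nf

lemma sig_toL {q : ℂ} (hq0 : q ≠ 0) (P : Polynomial ℂ) :
    sig q (toL P) = toL (P.comp (Polynomial.C q * Polynomial.X)) := by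
  have := sig_mul_toL hq0 1 P
  simpa [sig_one] using this

lemma comp_CqX_ne_zero {q : ℂ} (hq0 : q ≠ 0) {P : Polynomial ℂ} (hP : P ≠ 0) :
    P.comp (Polynomial.C q * Polynomial.X) ≠ 0 := by
  intro h
  rcases Polynomial.comp_eq_zero_iff.mp h with h1 | ⟨_, h2⟩
  · exact hP h1
  · have : (Polynomial.C q * Polynomial.X : Polynomial ℂ).coeff 0 = 0 := by
      simp
    rw [this, map_zero] at h2
    have : (Polynomial.C q * Polynomial.X : Polynomial ℂ) ≠ 0 := by
      simp [hq0, Polynomial.X_ne_zero]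
    exact this h2

lemma coe_algebraMap_ratFunc (P : Polynomial ℂ) :
    ((algebraMap (Polynomial ℂ) (RatFunc ℂ) P : RatFunc ℂ) : LS) = toL P := by
  rw [RatFunc.coe_num_denom]
  simp [RatFunc.num_algebraMap, RatFunc.denom_algebraMap, toL]

lemma coe_mul_denom (y : RatFunc ℂ) : (y : LS) * toL y.denom = toL y.num := by
  have h := RatFunc.coe_num_denom y
  have hden : toL y.denom ≠ 0 := by
    rw [ne_eq, toL_eq_zero_iff]; exact y.denom_ne_zero
  rw [h]
  exact div_mul_cancel₀ _ hden

/-- Key compatibility : coercion of `ratSubst q y` is `sig q` of the coercion. -/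
lemma coe_ratSubst {q : ℂ} (hq0 : q ≠ 0) (y : RatFunc ℂ) :
    ((ratSubst q y : RatFunc ℂ) : LS) = sig q (y : LS) := by
  have hD : y.denom.comp (Polynomial.C q * Polynomial.X) ≠ 0 :=
    comp_CqX_ne_zero hq0 y.denom_ne_zero
  have hDL : toL (y.denom.comp (Polynomial.C q * Polynomial.X)) ≠ 0 := by
    rw [ne_eq, toL_eq_zero_iff]; exact hD
  have h1 : sig q ((y : LS) * toL y.denom) = sig q (y : LS) *
      toL (y.denom.comp (Polynomial.C q * Polynomial.X)) := sig_mul_toL hq0 _ _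
  rw [coe_mul_denom, sig_toL hq0] at h1
  rw [ratSubst, RatFunc.coe_div, coe_algebraMap_ratFunc, coe_algebraMap_ratFunc, h1,
    mul_div_cancel_right₀ _ hDL]



/-! ### The embedding at infinity -/

def XInv : LS := single (-1 : ℤ) (1 : ℂ)

def phiI : Polynomial ℂ →ₐ[ℂ] LS := Polynomial.aeval XInv

lemma algC (r : ℂ) : (algebraMap ℂ LS) r = HahnSeries.C r := by
  rw [HahnSeries.algebraMap_apply', PowerSeries.algebraMap_apply, Algebra.algebraMap_self_apply, HahnSeries.ofPowerSeries_C]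

lemma XInv_pow (k : ℕ) : XInv ^ k = single (-(k : ℤ)) (1 : ℂ) := by
  rw [XInv, HahnSeries.single_pow, one_pow, nsmul_eq_mul, mul_neg_one]

lemma phiI_monomial (n : ℕ) (c : ℂ) :
    phiI (Polynomial.monomial n c) = single (-(n : ℤ)) c := by
  rw [phiI, Polynomial.aeval_monomial, XInv_pow]
  rw [algC, HahnSeries.C_apply, HahnSeries.single_mul_single, zero_add, mul_one]

lemma phiI_coeff_neg (P : Polynomial ℂ) (k : ℕ) : (phiI P).coeff (-(k : ℤ)) = P.coeff k := by
  induction P using Polynomial.induction_on' with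
  | add p r hp hr => rw [map_add, HahnSeries.coeff_add, hp, hr, Polynomial.coeff_add]
  | monomial n cc =>
      rw [phiI_monomial, coeff_single, Polynomial.coeff_monomial]
      split_ifs with h1 h2 h3 <;> first | rfl | (exfalso; omega)

lemma phiI_coeff_pos (P : Polynomial ℂ) {m : ℤ} (hm : 0 < m) : (phiI P).coeff m = 0 := by
  induction P using Polynomial.induction_on' with
  | add p r hp hr => rw [map_add, HahnSeries.coeff_add, hp, hr, add_zero]
  | monomial n cc =>
      rw [phiI_monomial, coeff_single, if_neg (by omega)]

lemma phiI_eq_zero_iff (P : Polynomial ℂ) : phiI P = 0 ↔ P = 0 := by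
  constructor
  · intro h
    ext k
    have := congrArg (fun f => HahnSeries.coeff f (-(k : ℤ))) h
    simpa [phiI_coeff_neg] using this
  · rintro rfl; exact map_zero _

lemma phiI_injective : Function.Injective phiI := by
  intro P Q h
  have : phiI (P - Q) = 0 := by rw [map_sub, h, sub_self]
  rw [phiI_eq_zero_iff, sub_eq_zero] at this
  exact this

def embI : RatFunc ℂ →ₐ[ℂ] LS :=
  RatFunc.liftAlgHom phiI
    (nonZeroDivisors_le_comap_nonZeroDivisors_of_injective _ phiI_injective)

lemma embI_injective : Function.Injective embI :=
  RatFunc.liftAlgHom_injective phiI phiI_injective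

lemma embI_algebraMap (P : Polynomial ℂ) :
    embI (algebraMap (Polynomial ℂ) (RatFunc ℂ) P) = phiI P := by
  have h := RatFunc.liftAlgHom_apply_div (φ := phiI)
    (hφ := nonZeroDivisors_le_comap_nonZeroDivisors_of_injective _ phiI_injective) P 1
  simpa [embI] using h

lemma embI_C (r : ℂ) : embI (RatFunc.C r) = HahnSeries.C r := by
  rw [← RatFunc.algebraMap_eq_C]
  rw [embI.commutes r, algC]

lemma embI_X : embI RatFunc.X = single (-1 : ℤ) (1 : ℂ) := by
  rw [← RatFunc.algebraMap_X, embI_algebraMap, phiI, Polynomial.aeval_X, XInv]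

lemma sig_mul_phiI {q : ℂ} (hq0 : q ≠ 0) (f : LS) (P : Polynomial ℂ) :
    sig q (f * phiI P) = sig q f * phiI (P.comp (Polynomial.C q⁻¹ * Polynomial.X)) := by
  induction P using Polynomial.induction_on' with
  | add p r hp hr =>
      rw [map_add, mul_add, sig_add, hp, hr, Polynomial.add_comp, map_add, mul_add]
  | monomial n cc =>
      rw [phiI_monomial, sig_mul_single hq0, monomial_comp_CqX, phiI_monomial]
      rw [zpow_neg, zpow_natCast, ← inv_pow]
      ring_nf

lemma sig_phiI {q : ℂ} (hq0 : q ≠ 0) (P : Polynomial ℂ) :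
    sig q (phiI P) = phiI (P.comp (Polynomial.C q⁻¹ * Polynomial.X)) := by
  have := sig_mul_phiI hq0 1 P
  simpa [sig_one] using this

lemma embI_ratSubst {q : ℂ} (hq0 : q ≠ 0) (y : RatFunc ℂ) :
    embI (ratSubst q y) = sig q⁻¹ (embI y) := by
  have hq0' : q⁻¹ ≠ 0 := inv_ne_zero hq0
  have hD : y.denom.comp (Polynomial.C q * Polynomial.X) ≠ 0 :=
    comp_CqX_ne_zero hq0 y.denom_ne_zero
  have hDL : phiI (y.denom.comp (Polynomial.C q * Polynomial.X)) ≠ 0 := by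
    rw [ne_eq, phiI_eq_zero_iff]; exact hD
  have h1 : y * algebraMap (Polynomial ℂ) (RatFunc ℂ) y.denom
      = algebraMap (Polynomial ℂ) (RatFunc ℂ) y.num := by
    nth_rewrite 1 [← RatFunc.num_div_denom y]
    rw [div_mul_cancel₀]
    exact RatFunc.algebraMap_ne_zero y.denom_ne_zero
  have h2 : embI y * phiI y.denom = phiI y.num := by
    have := congrArg embI h1
    rwa [map_mul, embI_algebraMap, embI_algebraMap] at this
  have h3 : sig q⁻¹ (embI y * phiI y.denom) = sig q⁻¹ (phiI y.num) := by rw [h2]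
  rw [sig_mul_phiI hq0', inv_inv, sig_phiI hq0', inv_inv] at h3
  rw [ratSubst, map_div₀, embI_algebraMap, embI_algebraMap, ← h3,
    mul_div_cancel_right₀ _ hDL]

/-! ### Coefficient recurrences -/

def Aq (q a b : ℂ) (n : ℤ) : ℂ := (1 - a * q ^ (n - 1)) * (1 - b * q ^ (n - 1))
def Bq (q c : ℂ) (n : ℤ) : ℂ := (1 - q ^ n) * (1 - c * q ^ (n - 1))

abbrev dc (y : RatFunc ℂ) (n : ℤ) : ℂ := ((y : LS)).coeff n
abbrev ec (y : RatFunc ℂ) (n : ℤ) : ℂ := (embI y).coeff (-n)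

lemma coeff_C_mul' (r : ℂ) (f : LS) (n : ℤ) : (HahnSeries.C r * f).coeff n = r * f.coeff n := by
  rw [HahnSeries.C_mul_eq_smul, HahnSeries.coeff_smul, smul_eq_mul]

lemma coeff_sh (g : LS) (n : ℤ) : ((single (1:ℤ) (1:ℂ)) * g).coeff n = g.coeff (n-1) := by
  have h2 := HahnSeries.coeff_single_mul_add (r := (1:ℂ)) (x := g) (a := n-1) (b := 1)
  rw [one_mul] at h2
  rw [show n - 1 + 1 = n by ring] at h2
  exact h2

lemma coeff_shI (g : LS) (n : ℤ) : ((single (-1:ℤ) (1:ℂ)) * g).coeff n = g.coeff (n+1) := by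
  have h2 := HahnSeries.coeff_single_mul_add (r := (1:ℂ)) (x := g) (a := n+1) (b := -1)
  rw [one_mul] at h2
  rw [show n + 1 + (-1) = n by ring] at h2
  exact h2

lemma coeff_linOp (r s : ℂ) (g : LS) (n : ℤ) :
    ((HahnSeries.C r * single (1 : ℤ) (1 : ℂ) - HahnSeries.C s) * g).coeff n
      = r * g.coeff (n - 1) - s * g.coeff n := by
  rw [sub_mul, HahnSeries.coeff_sub, mul_assoc, coeff_C_mul', coeff_C_mul', coeff_sh]

lemma coeff_linOpI (r s : ℂ) (g : LS) (m : ℤ) :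
    ((HahnSeries.C r * single (-1 : ℤ) (1 : ℂ) - HahnSeries.C s) * g).coeff m
      = r * g.coeff (m + 1) - s * g.coeff m := by
  rw [sub_mul, HahnSeries.coeff_sub, mul_assoc, coeff_C_mul', coeff_C_mul', coeff_shI]

lemma alg_key (q a b c : ℂ) (hq0 : q ≠ 0) (n : ℤ) (u v : ℂ) :
    (a * b * ((q ^ 2 : ℂ) ^ (n - 1) * u) - c * q⁻¹ * ((q ^ 2 : ℂ) ^ n * v))
      - ((a + b) * (q ^ (n - 1) * u) - (1 + c * q⁻¹) * (q ^ n * v)) + (u - v)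
    = Aq q a b n * u - Bq q c n * v := by
  have h2 : (q ^ 2 : ℂ) = q * q := sq q
  have hn : q ^ n = q ^ (n - 1) * q := by
    rw [zpow_sub_one₀ hq0, mul_assoc, inv_mul_cancel₀ hq0, mul_one]
  rw [h2, mul_zpow, mul_zpow, hn, Aq, Bq, zpow_sub_one₀ hq0]
  field_simp
  ring

lemma coeff_linOp1 (g : LS) (n : ℤ) :
    ((single (1:ℤ) (1:ℂ) - 1) * g).coeff n = g.coeff (n - 1) - g.coeff n := by
  rw [show (single (1:ℤ) (1:ℂ) - 1)
      = (HahnSeries.C 1 * single (1:ℤ) (1:ℂ) - HahnSeries.C (1:ℂ)) by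
    rw [HahnSeries.C_one, one_mul], coeff_linOp, one_mul, one_mul]

lemma coeff_linOpI1 (g : LS) (m : ℤ) :
    ((single (-1:ℤ) (1:ℂ) - 1) * g).coeff m = g.coeff (m + 1) - g.coeff m := by
  rw [show (single (-1:ℤ) (1:ℂ) - 1)
      = (HahnSeries.C 1 * single (-1:ℤ) (1:ℂ) - HahnSeries.C (1:ℂ)) by
    rw [HahnSeries.C_one, one_mul], coeff_linOpI, one_mul, one_mul]

lemma hahn_eq_zero_iff (f : LS) : f = 0 ↔ ∀ n : ℤ, f.coeff n = 0 := by
  constructor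
  · intro h n; rw [h]; rfl
  · intro h; ext n; exact h n

/-- The master characterization: `y` solves the equation iff its Laurent coefficients
at `0` satisfy the two-term recurrence. -/
lemma sol_iff {q a b c : ℂ} (hq0 : q ≠ 0) (y : RatFunc ℂ) :
    basicHypergeometricEq q a b c y ↔
      ∀ n : ℤ, Bq q c n * dc y n = Aq q a b n * dc y (n - 1) := by
  have hq2 : (q ^ 2 : ℂ) ≠ 0 := pow_ne_zero 2 hq0
  rw [basicHypergeometricEq]
  have h0 : ∀ E : RatFunc ℂ, E = 0 ↔ (E : LS) = 0 := fun E =>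
    ⟨fun h => by rw [h, RatFunc.coe_zero],
     fun h => RatFunc.coe_injective (by rwa [RatFunc.coe_zero])⟩
  rw [h0, hahn_eq_zero_iff]
  have hco : ∀ n : ℤ,
      (((RatFunc.C (a * b) * RatFunc.X - RatFunc.C (c * q⁻¹)) * ratSubst (q ^ 2) y
        - (RatFunc.C (a + b) * RatFunc.X - RatFunc.C (1 + c * q⁻¹)) * ratSubst q y
        + (RatFunc.X - 1) * y : RatFunc ℂ) : LS).coeff n
      = Aq q a b n * dc y (n - 1) - Bq q c n * dc y n := by
    intro n
    simp only [RatFunc.coe_add, RatFunc.coe_sub, RatFunc.coe_mul, RatFunc.coe_C,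
      RatFunc.coe_X, RatFunc.coe_one, coe_ratSubst hq0, coe_ratSubst hq2]
    rw [HahnSeries.coeff_add, HahnSeries.coeff_sub, coeff_linOp, coeff_linOp, coeff_linOp1,
      sig_coeff, sig_coeff, sig_coeff, sig_coeff]
    linear_combination alg_key q a b c hq0 n (dc y (n-1)) (dc y n)
  constructor
  · intro h n
    have h1 := (hco n).symm.trans (h n)
    rw [sub_eq_zero] at h1
    exact h1.symm
  · intro h n
    rw [hco n, h n, sub_self]

lemma zpow_inv_eq (q : ℂ) (m : ℤ) : (q⁻¹) ^ m = q ^ (-m) := by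
  rw [inv_zpow, ← zpow_neg]

/-- Solutions also satisfy the recurrence for the expansion at infinity. -/
lemma esol {q a b c : ℂ} (hq0 : q ≠ 0) {y : RatFunc ℂ}
    (hy : basicHypergeometricEq q a b c y) :
    ∀ n : ℤ, Bq q c n * ec y n = Aq q a b n * ec y (n - 1) := by
  have hq2 : (q ^ 2 : ℂ) ≠ 0 := pow_ne_zero 2 hq0
  rw [basicHypergeometricEq] at hy
  have h0 := congrArg embI hy
  rw [map_zero] at h0
  intro n
  have hco : (embI ((RatFunc.C (a * b) * RatFunc.X - RatFunc.C (c * q⁻¹)) * ratSubst (q ^ 2) y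
        - (RatFunc.C (a + b) * RatFunc.X - RatFunc.C (1 + c * q⁻¹)) * ratSubst q y
        + (RatFunc.X - 1) * y)).coeff (-n)
      = Aq q a b n * ec y (n - 1) - Bq q c n * ec y n := by
    have ema : ∀ x z : RatFunc ℂ, embI (x + z) = embI x + embI z := fun x z => map_add _ x z
    have ems : ∀ x z : RatFunc ℂ, embI (x - z) = embI x - embI z := fun x z => map_sub _ x z
    have emm : ∀ x z : RatFunc ℂ, embI (x * z) = embI x * embI z := fun x z => map_mul _ x z
    have emo : embI 1 = 1 := map_one _
    simp only [ema, ems, emm, emo, embI_C, embI_X, embI_ratSubst hq0, embI_ratSubst hq2]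
    rw [HahnSeries.coeff_add, HahnSeries.coeff_sub, coeff_linOpI, coeff_linOpI, coeff_linOpI1,
      sig_coeff, sig_coeff, sig_coeff, sig_coeff,
      show (-n + 1 : ℤ) = -(n-1) by ring,
      zpow_inv_eq (q^2) (-(n-1)), zpow_inv_eq q (-(n-1)), zpow_inv_eq (q^2) (-n),
      zpow_inv_eq q (-n), show (-(-(n-1)) : ℤ) = n - 1 by ring,
      show (-(-n) : ℤ) = n by ring]
    linear_combination alg_key q a b c hq0 n (ec y (n-1)) (ec y n)
  have h1 : (embI ((RatFunc.C (a * b) * RatFunc.X - RatFunc.C (c * q⁻¹)) * ratSubst (q ^ 2) y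
        - (RatFunc.C (a + b) * RatFunc.X - RatFunc.C (1 + c * q⁻¹)) * ratSubst q y
        + (RatFunc.X - 1) * y)).coeff (-n) = 0 := by rw [h0]; rfl
  have h2 := (hco).symm.trans h1
  rw [sub_eq_zero] at h2
  exact h2.symm

/-! ### basic structure of solutions -/

def RecSeq (q a b c : ℂ) (w : ℤ → ℂ) : Prop :=
  ∀ n : ℤ, Bq q c n * w n = Aq q a b n * w (n - 1)

lemma coe_ne_zero' {y : RatFunc ℂ} (hy : y ≠ 0) : (y : LS) ≠ 0 := by
  intro h
  exact hy (RatFunc.coe_injective (by rwa [RatFunc.coe_zero]))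

lemma embI_ne_zero {y : RatFunc ℂ} (hy : y ≠ 0) : embI y ≠ 0 := by
  intro h
  exact hy (embI_injective (by rwa [map_zero]))

lemma rec_order_bzero {q a b c : ℂ} {y : RatFunc ℂ} (hy0 : y ≠ 0)
    (h : RecSeq q a b c (dc y)) : Bq q c ((y : LS).order) = 0 := by
  have hne := coe_ne_zero' hy0
  have hco : dc y ((y : LS).order) ≠ 0 := HahnSeries.coeff_order_ne_zero hne
  have hlow : dc y ((y : LS).order - 1) = 0 :=
    HahnSeries.coeff_eq_zero_of_lt_order (by omega)
  have := h ((y : LS).order)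
  rw [hlow, mul_zero] at this
  exact (mul_eq_zero.mp this).resolve_right hco

lemma rec_e_azero {q a b c : ℂ} {y : RatFunc ℂ} (hy0 : y ≠ 0)
    (h : RecSeq q a b c (ec y)) : Aq q a b (1 - (embI y).order) = 0 := by
  have hne := embI_ne_zero hy0
  have hco : ec y (-(embI y).order) ≠ 0 := by
    rw [ec, neg_neg]; exact HahnSeries.coeff_order_ne_zero hne
  have hlow : ec y (1 - (embI y).order) = 0 := by
    rw [ec]; exact HahnSeries.coeff_eq_zero_of_lt_order (by omega)
  have := h (1 - (embI y).order)
  rw [hlow, mul_zero, show (1 - (embI y).order - 1 : ℤ) = -(embI y).order by ring] at this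
  exact ((mul_eq_zero.mp this.symm).resolve_right hco)

lemma sol_eq_zero {q a b c : ℂ} {y : RatFunc ℂ}
    (h : RecSeq q a b c (dc y)) (hv : ∀ n, Bq q c n = 0 → dc y n = 0) : y = 0 := by
  by_contra hy0
  exact HahnSeries.coeff_order_ne_zero (coe_ne_zero' hy0)
    (hv _ (rec_order_bzero hy0 h))

/-! ### powers of `q` -/

section qfacts
variable {q : ℂ} (hq0 : q ≠ 0) (hqru : ∀ m : ℕ, 0 < m → q ^ m ≠ 1)
include hq0 hqru

lemma zpow_eq_one_iff {n : ℤ} : q ^ n = 1 ↔ n = 0 := by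
  constructor
  · intro h
    by_contra hn
    rcases lt_or_gt_of_ne hn with hn | hn
    · have h2 : q ^ (-n) = 1 := by rw [zpow_neg, h, inv_one]
      obtain ⟨m, hm⟩ : ∃ m : ℕ, (-n) = (m : ℤ) := ⟨(-n).toNat, by omega⟩
      rw [hm, zpow_natCast] at h2
      exact hqru m (by omega) h2
    · obtain ⟨m, hm⟩ : ∃ m : ℕ, n = (m : ℤ) := ⟨n.toNat, by omega⟩
      rw [hm, zpow_natCast] at h
      exact hqru m (by omega) h
  · rintro rfl; exact zpow_zero q

lemma zpow_injective' {m n : ℤ} (h : q ^ m = q ^ n) : m = n := by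
  have h1 : q ^ (m - n) = 1 := by
    rw [zpow_sub₀ hq0, h, div_self (zpow_ne_zero n hq0)]
  have := (zpow_eq_one_iff hq0 hqru).mp h1
  omega

lemma qmul_eq_one {r : ℂ} {n : ℤ} (h : r * q ^ (n - 1) = 1) : r = q ^ (1 - n) := by
  have h1 : q ^ (n - 1) ≠ 0 := zpow_ne_zero _ hq0
  rw [eq_inv_of_mul_eq_one_left h, ← zpow_neg]
  congr 1
  ring

lemma qpow_mul_qpow (γ : ℤ) {n : ℤ} : q ^ γ * q ^ (n - 1) = q ^ (γ + n - 1) := by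
  rw [← zpow_add₀ hq0]; ring_nf

lemma Bq_zero_iff {c : ℂ} {γ : ℤ} (hc : c = q ^ γ) {n : ℤ} :
    Bq q c n = 0 ↔ n = 0 ∨ n = 1 - γ := by
  rw [Bq, mul_eq_zero, sub_eq_zero, sub_eq_zero, hc, qpow_mul_qpow hq0 hqru,
    eq_comm (a := (1:ℂ)), eq_comm (a := (1:ℂ)), zpow_eq_one_iff hq0 hqru,
    zpow_eq_one_iff hq0 hqru]
  omega

lemma Aq_zero_iff {a b : ℂ} {α β : ℤ} (ha : a = q ^ α) (hb : b = q ^ β) {n : ℤ} :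
    Aq q a b n = 0 ↔ n = 1 - α ∨ n = 1 - β := by
  rw [Aq, mul_eq_zero, sub_eq_zero, sub_eq_zero, ha, hb, qpow_mul_qpow hq0 hqru,
    qpow_mul_qpow hq0 hqru, eq_comm (a := (1:ℂ)), eq_comm (a := (1:ℂ)),
    zpow_eq_one_iff hq0 hqru, zpow_eq_one_iff hq0 hqru]
  omega

end qfacts

lemma Aq_zero_cases {q a b : ℂ} {n : ℤ} (h : Aq q a b n = 0) :
    a * q ^ (n - 1) = 1 ∨ b * q ^ (n - 1) = 1 := by
  rcases mul_eq_zero.mp h with h | h <;> [left; right] <;>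
    · rw [sub_eq_zero] at h; exact h.symm

lemma Bq_zero_cases {q c : ℂ} {n : ℤ} (h : Bq q c n = 0) :
    q ^ n = 1 ∨ c * q ^ (n - 1) = 1 := by
  rcases mul_eq_zero.mp h with h | h <;> [left; right] <;>
    · rw [sub_eq_zero] at h; exact h.symm

/-! ### linear structure of solutions -/

lemma dc_comb (s t : ℂ) (y z : RatFunc ℂ) (n : ℤ) :
    dc (s • y + t • z) n = s * dc y n + t * dc z n := by
  rw [dc, RatFunc.coe_add, RatFunc.coe_smul, RatFunc.coe_smul, HahnSeries.coeff_add,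
    HahnSeries.coeff_smul, HahnSeries.coeff_smul, smul_eq_mul, smul_eq_mul]

lemma sol_comb {q a b c : ℂ} (hq0 : q ≠ 0) {y z : RatFunc ℂ}
    (hy : basicHypergeometricEq q a b c y) (hz : basicHypergeometricEq q a b c z)
    (s t : ℂ) : basicHypergeometricEq q a b c (s • y + t • z) := by
  rw [sol_iff hq0] at hy hz ⊢
  intro n
  rw [dc_comb, dc_comb]
  linear_combination s * hy n + t * hz n

/-- From two independent solutions, get a solution with prescribed coefficients
at the two zeros of `B`. -/
lemma exists_sol_with {q a b c : ℂ} (hq0 : q ≠ 0) {y₁ y₂ : RatFunc ℂ}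
    (hy₁ : basicHypergeometricEq q a b c y₁) (hy₂ : basicHypergeometricEq q a b c y₂)
    (hli : LinearIndependent ℂ ![y₁, y₂]) {m₁ m₂ : ℤ}
    (hBsub : ∀ n, Bq q c n = 0 → (n = m₁ ∨ n = m₂)) (v₁ v₂ : ℂ) :
    ∃ y, basicHypergeometricEq q a b c y ∧ dc y m₁ = v₁ ∧ dc y m₂ = v₂ := by
  have hpair := LinearIndependent.pair_iff.mp hli
  let T : ℂ × ℂ →ₗ[ℂ] RatFunc ℂ :=
    { toFun := fun p => p.1 • y₁ + p.2 • y₂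
      map_add' := by
        intro p r
        simp only [Prod.fst_add, Prod.snd_add, add_smul]
        abel
      map_smul' := by
        intro m p
        simp only [Prod.smul_fst, Prod.smul_snd, RingHom.id_apply, smul_smul, smul_add,
          smul_eq_mul] }
  let CF : RatFunc ℂ →ₗ[ℂ] ℂ × ℂ :=
    { toFun := fun y => (dc y m₁, dc y m₂)
      map_add' := by
        intro y z
        have h1 := dc_comb 1 1 y z m₁
        have h2 := dc_comb 1 1 y z m₂
        simp only [one_smul, one_mul] at h1 h2
        simp [h1, h2, Prod.ext_iff]
      map_smul' := by
        intro m y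
        have h1 := dc_comb m 0 y 0 m₁
        have h2 := dc_comb m 0 y 0 m₂
        simp only [zero_smul, add_zero, zero_mul] at h1 h2
        simp [h1, h2, Prod.ext_iff, smul_eq_mul] }
  have hinj : Function.Injective (CF ∘ₗ T) := by
    rw [← LinearMap.ker_eq_bot, LinearMap.ker_eq_bot']
    intro p hp
    have hsol : basicHypergeometricEq q a b c (p.1 • y₁ + p.2 • y₂) :=
      sol_comb hq0 hy₁ hy₂ p.1 p.2
    have h0 : p.1 • y₁ + p.2 • y₂ = 0 := by
      apply sol_eq_zero ((sol_iff hq0 _).mp hsol)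
      intro n hn
      have hco : dc (p.1 • y₁ + p.2 • y₂) m₁ = 0 ∧ dc (p.1 • y₁ + p.2 • y₂) m₂ = 0 := by
        have := congrArg Prod.fst hp
        have h2 := congrArg Prod.snd hp
        exact ⟨this, h2⟩
      rcases hBsub n hn with rfl | rfl
      · exact hco.1
      · exact hco.2
    have := hpair p.1 p.2 h0
    exact Prod.ext this.1 this.2
  have hsurj : Function.Surjective (CF ∘ₗ T) := LinearMap.surjective_of_injective hinj
  obtain ⟨p, hp⟩ := hsurj (v₁, v₂)
  refine ⟨p.1 • y₁ + p.2 • y₂, sol_comb hq0 hy₁ hy₂ p.1 p.2, ?_, ?_⟩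
  · exact congrArg Prod.fst hp
  · exact congrArg Prod.snd hp

/-! ### Laurent monomials and finite sums -/

lemma sum_coeff {ι : Type*} (s : Finset ι) (f : ι → LS) (n : ℤ) :
    (∑ i ∈ s, f i).coeff n = ∑ i ∈ s, (f i).coeff n :=
  map_sum (HahnSeries.coeff.addMonoidHom n) f s

lemma single_inv (w : ℤ) : (single w (1:ℂ) : LS)⁻¹ = single (-w) 1 := by
  apply inv_eq_of_mul_eq_one_right
  rw [HahnSeries.single_mul_single, mul_one, add_neg_cancel, HahnSeries.single_zero_one]

lemma single_one_zpow (w : ℤ) (j : ℤ) : (single w (1:ℂ) : LS) ^ j = single (j * w) 1 := by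
  rcases j with m | m
  · rw [Int.ofNat_eq_coe, zpow_natCast, HahnSeries.single_pow, one_pow, nsmul_eq_mul]
  · rw [zpow_negSucc, HahnSeries.single_pow, one_pow, single_inv, nsmul_eq_mul]
    congr 1
    rw [Int.negSucc_eq]
    push_cast
    ring

lemma coe_zpowX (j : ℤ) : ((RatFunc.X ^ j : RatFunc ℂ) : LS) = single j (1:ℂ) := by
  rw [RatFunc.coe_def, map_zpow₀ (RatFunc.coeAlgHom ℂ), RatFunc.coe_apply, RatFunc.coe_X,
    single_one_zpow, mul_one]

lemma embI_zpowX (j : ℤ) : embI (RatFunc.X ^ j) = single (-j) (1:ℂ) := by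
  rw [map_zpow₀ embI, embI_X, single_one_zpow, mul_neg_one]

/-- finite Laurent sums with prescribed coefficients -/
def lpoly (w : ℤ → ℂ) (s : Finset ℤ) : RatFunc ℂ := ∑ j ∈ s, w j • RatFunc.X ^ j

lemma dc_lpoly (w : ℤ → ℂ) (s : Finset ℤ) (n : ℤ) :
    dc (lpoly w s) n = if n ∈ s then w n else 0 := by
  rw [lpoly, dc, RatFunc.coe_def, map_sum, sum_coeff]
  have hterm : ∀ j ∈ s, ((RatFunc.coeAlgHom ℂ) (w j • RatFunc.X ^ j)).coeff n
      = if n = j then w j else 0 := by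
    intro j _
    rw [RatFunc.coe_apply, RatFunc.coe_smul, HahnSeries.coeff_smul, coe_zpowX, coeff_single]
    simp only [smul_eq_mul, mul_ite, mul_one, mul_zero]
  rw [Finset.sum_congr rfl hterm, Finset.sum_ite_eq s n (fun j => w j)]

lemma ec_lpoly (w : ℤ → ℂ) (s : Finset ℤ) (n : ℤ) :
    ec (lpoly w s) n = if n ∈ s then w n else 0 := by
  rw [lpoly, ec, map_sum, sum_coeff]
  have hterm : ∀ j ∈ s, (embI (w j • RatFunc.X ^ j)).coeff (-n)
      = if n = j then w j else 0 := by
    intro j _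
    rw [RatFunc.smul_eq_C_mul, map_mul, embI_C, coeff_C_mul', embI_zpowX, coeff_single]
    simp only [neg_inj, mul_ite, mul_one, mul_zero]
  rw [Finset.sum_congr rfl hterm, Finset.sum_ite_eq s n (fun j => w j)]

/-! ### the forward direction : structural analysis -/

section Forward
variable {q a b c : ℂ} (hq0 : q ≠ 0) (hqru : ∀ m : ℕ, 0 < m → q ^ m ≠ 1)

include hq0 in
/-- If `B` has a single zero, there are no two independent solutions. -/
lemma single_zero_absurd {y₁ y₂ : RatFunc ℂ}
    (hy₁ : basicHypergeometricEq q a b c y₁) (hy₂ : basicHypergeometricEq q a b c y₂)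
    (hli : LinearIndependent ℂ ![y₁, y₂]) {m₀ : ℤ}
    (hBsub : ∀ n, Bq q c n = 0 → n = m₀) : False := by
  obtain ⟨y, _, hv1, hv2⟩ := exists_sol_with hq0 hy₁ hy₂ hli
    (m₁ := m₀) (m₂ := m₀) (fun n hn => Or.inl (hBsub n hn)) 1 0
  rw [hv2] at hv1
  exact one_ne_zero hv1.symm

include hq0 hqru in
/-- Two independent solutions force `c` to be a power of `q`, with `γ ≠ 1`. -/
lemma exists_gamma {y₁ y₂ : RatFunc ℂ}
    (hy₁ : basicHypergeometricEq q a b c y₁) (hy₂ : basicHypergeometricEq q a b c y₂)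
    (hli : LinearIndependent ℂ ![y₁, y₂]) : ∃ γ : ℤ, c = q ^ γ ∧ γ ≠ 1 := by
  by_contra hcon
  push_neg at hcon
  apply single_zero_absurd hq0 hy₁ hy₂ hli (m₀ := 0)
  intro n hn
  rcases Bq_zero_cases hn with h | h
  · exact (zpow_eq_one_iff hq0 hqru).mp h
  · have hc : c = q ^ (1 - n) := qmul_eq_one hq0 hqru h
    have := hcon (1 - n) hc
    omega

include hq0 hqru in
/-- analysis of the solution `u` (value 1 at `m₁`, 0 at `m₂`) : there must be a zero of
`A` in the window `(m₁, m₂]`. -/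
lemma u_analysis {γ : ℤ} (hc : c = q ^ γ) {m₁ m₂ : ℤ} (hm : m₁ < m₂)
    (hBiff : ∀ n, Bq q c n = 0 ↔ (n = m₁ ∨ n = m₂)) {u : RatFunc ℂ}
    (hu : RecSeq q a b c (dc u)) (hu1 : dc u m₁ = 1) (hu2 : dc u m₂ = 0) :
    ∃ k, m₁ < k ∧ k ≤ m₂ ∧ Aq q a b k = 0 := by
  by_contra hcon
  push_neg at hcon
  have key : ∀ j, m₁ ≤ j → (j ≤ m₂ - 1 → dc u j ≠ 0) := by
    intro j hj
    refine Int.le_induction (m := m₁) (motive := fun j _ => j ≤ m₂ - 1 → dc u j ≠ 0) ?_ ?_ j hj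
    · intro _; rw [hu1]; exact one_ne_zero
    · intro j hj ih hj2
      have hdj : dc u j ≠ 0 := ih (by omega)
      have hB : Bq q c (j + 1) ≠ 0 := by
        rw [ne_eq, hBiff]; omega
      have hA : Aq q a b (j + 1) ≠ 0 := hcon (j+1) (by omega) (by omega)
      have := hu (j + 1)
      rw [show (j + 1 - 1 : ℤ) = j by ring] at this
      intro h0
      rw [h0, mul_zero] at this
      rcases mul_eq_zero.mp this.symm with h | h
      · exact hA h
      · exact hdj h
  have hlast : dc u (m₂ - 1) ≠ 0 := key (m₂ - 1) (by omega) (by omega)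
  have hB : Bq q c m₂ = 0 := (hBiff m₂).mpr (Or.inr rfl)
  have h := hu m₂
  rw [hu2, mul_zero] at h
  rcases mul_eq_zero.mp h.symm with h | h
  · exact hcon m₂ hm le_rfl h
  · exact hlast h

include hq0 hqru in
/-- analysis of the solution `v` (value 0 at `m₁`, 1 at `m₂`) : either `A` has a zero above
`m₂` (terminating case), or `A` has a zero `≤ m₁` (non-terminating case, via the expansion
at infinity). -/
lemma v_analysis {m₁ m₂ : ℤ} (hm : m₁ < m₂)
    (hBiff : ∀ n, Bq q c n = 0 ↔ (n = m₁ ∨ n = m₂)) {v : RatFunc ℂ}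
    (hsol : basicHypergeometricEq q a b c v)
    (hv1 : dc v m₁ = 0) (hv2 : dc v m₂ = 1) :
    ∃ k, (m₂ < k ∨ k ≤ m₁) ∧ Aq q a b k = 0 := by
  have hv := (sol_iff hq0 v).mp hsol
  have hv0 : v ≠ 0 := by
    intro h
    rw [h, dc, RatFunc.coe_zero, HahnSeries.coeff_zero] at hv2
    exact one_ne_zero hv2.symm
  by_cases hterm : ∃ n, m₂ < n ∧ dc v n = 0
  · obtain ⟨t, ⟨ht1, ht2⟩, hmin⟩ := Int.exists_least_of_bdd
      (P := fun z => m₂ < z ∧ dc v z = 0) ⟨m₂, fun z hz => le_of_lt hz.1⟩ hterm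
    have hprev : dc v (t - 1) ≠ 0 := by
      rcases eq_or_lt_of_le (show m₂ ≤ t - 1 by omega) with he | hl
      · rw [← he, hv2]; exact one_ne_zero
      · intro h0
        have := hmin (t - 1) ⟨hl, h0⟩
        omega
    have h := hv t
    rw [ht2, mul_zero] at h
    rcases mul_eq_zero.mp h.symm with h | h
    · exact ⟨t, Or.inl ht1, h⟩
    · exact absurd h hprev
  · push_neg at hterm
    by_contra hcon
    push_neg at hcon
    have he := esol hq0 hsol
    have hFne : embI v ≠ 0 := embI_ne_zero hv0
    have hbase : ec v (m₁ - 1) = 0 := by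
      have h := he m₁
      rw [(hBiff m₁).mpr (Or.inl rfl), zero_mul] at h
      have hA : Aq q a b m₁ ≠ 0 := hcon m₁ (Or.inr le_rfl)
      rcases mul_eq_zero.mp h.symm with h | h
      · exact absurd h hA
      · exact h
    have hdown : ∀ n ≤ m₁ - 1, ec v n = 0 := by
      refine Int.le_induction_down hbase ?_
      intro n hn ih
      have h := he n
      rw [ih, mul_zero] at h
      have hA : Aq q a b n ≠ 0 := hcon n (Or.inr (by omega))
      rcases mul_eq_zero.mp h.symm with h | h
      · exact absurd h hA
      · exact h
    have hL : v = lpoly (fun j => ec v j) (Finset.Icc m₁ (-(embI v).order)) := by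
      apply embI_injective
      ext m
      have hrhs : (embI (lpoly (fun j => ec v j) (Finset.Icc m₁ (-(embI v).order)))).coeff m
          = if -m ∈ Finset.Icc m₁ (-(embI v).order) then ec v (-m) else 0 := by
        have h1 := ec_lpoly (fun j => ec v j) (Finset.Icc m₁ (-(embI v).order)) (-m)
        rw [ec, neg_neg] at h1
        exact h1
      rw [hrhs]
      split_ifs with hmem
      · rw [ec, neg_neg]
      · rw [Finset.mem_Icc] at hmem
        push_neg at hmem
        rcases lt_or_ge (-m) m₁ with hcase | hcase
        · have : ec v (-m) = 0 := hdown (-m) (by omega)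
          rw [ec, neg_neg] at this
          rw [this]
        · have hmo : m < (embI v).order := by
            have := hmem hcase
            omega
          exact HahnSeries.coeff_eq_zero_of_lt_order hmo
    set N := max (m₂ + 1) (-(embI v).order + 1) with hN
    have hN1 : m₂ < N := lt_of_lt_of_le (by omega) (le_max_left _ _)
    have hN2 : -(embI v).order < N := lt_of_lt_of_le (by omega) (le_max_right _ _)
    have hdcN : dc v N ≠ 0 := hterm N hN1
    apply hdcN
    rw [hL, dc_lpoly, if_neg]
    intro hmem
    rw [Finset.mem_Icc] at hmem
    omega

lemma zSet_iff (x y : ℤ) : (x, y) ∈ zSet ↔ ((0 < x ∧ y ≤ 0) ∨ (x ≤ 0 ∧ 0 < y)) := Iff.rfl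

include hq0 hqru in
/-- The forward direction of the main theorem. -/
lemma forward {y₁ y₂ : RatFunc ℂ}
    (hy₁ : basicHypergeometricEq q a b c y₁) (hy₂ : basicHypergeometricEq q a b c y₂)
    (hli : LinearIndependent ℂ ![y₁, y₂]) :
    ∃ α β γ : ℤ, a = q ^ α ∧ b = q ^ β ∧ c = q ^ γ ∧
      ((α, α + 1 - γ) ∈ zSet ∨ (β, β + 1 - γ) ∈ zSet) ∧
      ((α, β) ∈ zSet ∨ (α + 1 - γ, β + 1 - γ) ∈ zSet) := by
  obtain ⟨γ, hc, hγ⟩ := exists_gamma hq0 hqru hy₁ hy₂ hli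
  obtain ⟨m₁, m₂, hm, hOR⟩ : ∃ m₁ m₂ : ℤ, m₁ < m₂ ∧
      ((m₁ = 0 ∧ m₂ = 1 - γ) ∨ (m₁ = 1 - γ ∧ m₂ = 0)) := by
    rcases lt_or_gt_of_ne hγ with h | h
    · exact ⟨0, 1 - γ, by omega, Or.inl ⟨rfl, rfl⟩⟩
    · exact ⟨1 - γ, 0, by omega, Or.inr ⟨rfl, rfl⟩⟩
  have hBiff : ∀ n, Bq q c n = 0 ↔ (n = m₁ ∨ n = m₂) := by
    intro n
    rw [Bq_zero_iff hq0 hqru hc]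
    rcases hOR with ⟨h1, h2⟩ | ⟨h1, h2⟩ <;> omega
  obtain ⟨u, hus, hu1, hu2⟩ :=
    exists_sol_with hq0 hy₁ hy₂ hli (fun n hn => (hBiff n).mp hn) 1 0
  obtain ⟨v, hvs, hv1, hv2⟩ :=
    exists_sol_with hq0 hy₁ hy₂ hli (fun n hn => (hBiff n).mp hn) 0 1
  obtain ⟨k₁, hk₁a, hk₁b, hk₁A⟩ :=
    u_analysis hq0 hqru hc hm hBiff ((sol_iff hq0 u).mp hus) hu1 hu2
  obtain ⟨k₂, hk₂pos, hk₂A⟩ := v_analysis hq0 hqru hm hBiff hvs hv1 hv2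
  have hkne : k₁ ≠ k₂ := by rcases hk₂pos with h | h <;> omega
  rcases Aq_zero_cases hk₁A with h1 | h1 <;> rcases Aq_zero_cases hk₂A with h2 | h2
  · exfalso
    have e1 := qmul_eq_one hq0 hqru h1
    have e2 := qmul_eq_one hq0 hqru h2
    exact hkne (by have := zpow_injective' hq0 hqru (e1.symm.trans e2); omega)
  · -- a-zero at k₁, b-zero at k₂
    refine ⟨1 - k₁, 1 - k₂, γ, qmul_eq_one hq0 hqru h1, qmul_eq_one hq0 hqru h2, hc, ?_, ?_⟩
    · left
      rw [zSet_iff]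
      rcases hOR with ⟨e1, e2⟩ | ⟨e1, e2⟩ <;> omega
    · rcases hOR with ⟨e1, e2⟩ | ⟨e1, e2⟩ <;> [skip; skip] <;>
        rcases hk₂pos with h | h <;>
        simp only [zSet_iff] <;> omega
  · -- b-zero at k₁, a-zero at k₂
    refine ⟨1 - k₂, 1 - k₁, γ, qmul_eq_one hq0 hqru h2, qmul_eq_one hq0 hqru h1, hc, ?_, ?_⟩
    · right
      rw [zSet_iff]
      rcases hOR with ⟨e1, e2⟩ | ⟨e1, e2⟩ <;> omega
    · rcases hOR with ⟨e1, e2⟩ | ⟨e1, e2⟩ <;>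
        rcases hk₂pos with h | h <;>
        simp only [zSet_iff] <;> omega
  · exfalso
    have e1 := qmul_eq_one hq0 hqru h1
    have e2 := qmul_eq_one hq0 hqru h2
    exact hkne (by have := zpow_injective' hq0 hqru (e1.symm.trans e2); omega)

end Forward

/-! ### Constructions for the backward direction -/

section Backward
variable {q a b c : ℂ}

lemma coeff_shk (k : ℤ) (g : LS) (n : ℤ) :
    ((single k (1:ℂ)) * g).coeff n = g.coeff (n - k) := by
  have h2 := HahnSeries.coeff_single_mul_add (r := (1:ℂ)) (x := g) (a := n - k) (b := k)
  rw [one_mul, show n - k + k = n by ring] at h2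
  exact h2

def geom : LS := HahnSeries.ofPowerSeries ℤ ℂ (PowerSeries.mk fun _ => (1:ℂ))

lemma geom_coeff (n : ℤ) : geom.coeff n = if 0 ≤ n then 1 else 0 := by
  rw [geom]
  erw [PowerSeries.coeff_coe]
  rw [PowerSeries.coeff_mk]
  split_ifs with h1 h2 h3 <;> first | rfl | omega

lemma coe_one_sub_X_inv : (((1 - RatFunc.X)⁻¹ : RatFunc ℂ) : LS) = geom := by
  have hmul : ((1 : LS) - single 1 1) * geom = 1 := by
    ext n
    rw [sub_mul, one_mul, HahnSeries.coeff_sub, coeff_shk, geom_coeff, geom_coeff,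
      HahnSeries.coeff_one]
    split_ifs <;> first | omega | norm_num
  rw [RatFunc.coe_def, map_inv₀, RatFunc.coe_apply, RatFunc.coe_sub, RatFunc.coe_one,
    RatFunc.coe_X]
  exact inv_eq_of_mul_eq_one_right hmul

lemma exists_prod_series (hq0 : q ≠ 0) (n₀ : ℤ) (M : Multiset ℤ) :
    ∃ y : RatFunc ℂ, ∀ n : ℤ, dc y n
      = if n₀ ≤ n then (M.map (fun j => 1 - q ^ (n + j))).prod else 0 := by
  induction M using Multiset.induction_on with
  | empty =>
      refine ⟨RatFunc.X ^ n₀ * (1 - RatFunc.X)⁻¹, fun n => ?_⟩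
      rw [dc, RatFunc.coe_mul, coe_zpowX, coe_one_sub_X_inv, coeff_shk, geom_coeff]
      simp only [Multiset.map_zero, Multiset.prod_zero]
      split_ifs with h1 h2 h3 <;> first | rfl | omega
  | cons j₀ M ih =>
      obtain ⟨y, hy⟩ := ih
      refine ⟨y - RatFunc.C (q ^ j₀) * ratSubst q y, fun n => ?_⟩
      rw [dc, RatFunc.coe_sub, RatFunc.coe_mul, RatFunc.coe_C, coe_ratSubst hq0,
        HahnSeries.coeff_sub, coeff_C_mul', sig_coeff]
      have hdc : ((y : LS)).coeff n = dc y n := rfl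
      rw [hdc, hy n, Multiset.map_cons, Multiset.prod_cons]
      split_ifs with h
      · rw [zpow_add₀ hq0]
        ring
      · simp

/-- the running product along the recurrence -/
def wseq (q a b c : ℂ) (m : ℤ) (n : ℤ) : ℂ :=
  ∏ k ∈ Finset.Ioc m n, (Aq q a b k / Bq q c k)

lemma wseq_self (m : ℤ) : wseq q a b c m m = 1 := by
  rw [wseq, Finset.Ioc_self, Finset.prod_empty]

lemma wseq_step {m n : ℤ} (hn : m < n) :
    wseq q a b c m n = wseq q a b c m (n-1) * (Aq q a b n / Bq q c n) := by
  rw [wseq, wseq, show Finset.Ioc m n = insert n (Finset.Ioc m (n-1)) from by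
      ext x; simp only [Finset.mem_Ioc, Finset.mem_insert]; omega,
    Finset.prod_insert (by simp only [Finset.mem_Ioc]; omega)]
  ring

lemma recseq_congr {w w' : ℤ → ℂ} (h : ∀ n, w n = w' n) (hw : RecSeq q a b c w) :
    RecSeq q a b c w' := by
  intro n
  rw [← h n, ← h (n-1)]
  exact hw n

/-- terminating window solutions -/
lemma window_sol (hq0 : q ≠ 0) {m t : ℤ} (hmt : m < t) (hBm : Bq q c m = 0)
    (hBne : ∀ k, m < k → k ≤ t - 1 → Bq q c k ≠ 0) (hAt : Aq q a b t = 0) :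
    ∃ u : RatFunc ℂ, basicHypergeometricEq q a b c u ∧
      ∀ n, dc u n = if m ≤ n ∧ n ≤ t - 1 then wseq q a b c m n else 0 := by
  refine ⟨lpoly (wseq q a b c m) (Finset.Icc m (t-1)), ?_, ?_⟩
  swap
  · intro n
    rw [dc_lpoly]
    simp only [Finset.mem_Icc]
  · rw [sol_iff hq0]
    have hfun : ∀ n, (if m ≤ n ∧ n ≤ t - 1 then wseq q a b c m n else 0)
        = dc (lpoly (wseq q a b c m) (Finset.Icc m (t-1))) n := by
      intro n
      rw [dc_lpoly]
      simp only [Finset.mem_Icc]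
    refine recseq_congr hfun ?_
    intro n
    dsimp only
    rcases lt_trichotomy n m with h | h | h
    · rw [if_neg (by omega), if_neg (by omega), mul_zero, mul_zero]
    · subst h
      rw [hBm, zero_mul, if_neg (by omega), mul_zero]
    · rcases lt_trichotomy n t with h2 | h2 | h2
      · rw [if_pos (by omega), if_pos (by omega), wseq_step h]
        have hB := hBne n (by omega) (by omega)
        field_simp
      · subst h2
        rw [if_neg (by omega), mul_zero, hAt, zero_mul]
      · rw [if_neg (by omega), if_neg (by omega), mul_zero, mul_zero]

/-- the key telescoping identity for one pair of intervals. -/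
lemma pair_step (q : ℂ) (n u : ℤ) : ∀ v, u ≤ v →
    (1 - q^(n+u)) * (∏ j ∈ Finset.Ioc u v, (1 - q^(n+j)))
    = (1 - q^(n+v)) * (∏ j ∈ Finset.Ioc u v, (1 - q^(n-1+j))) := by
  refine Int.le_induction ?_ ?_
  · rw [Finset.Ioc_self, Finset.prod_empty, Finset.prod_empty]
  · intro v hv ih
    have hsplit : Finset.Ioc u (v+1) = insert (v+1) (Finset.Ioc u v) := by
      ext x; simp only [Finset.mem_Ioc, Finset.mem_insert]; omega
    have hnotmem : (v+1) ∉ Finset.Ioc u v := by simp only [Finset.mem_Ioc]; omega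
    rw [hsplit, Finset.prod_insert hnotmem, Finset.prod_insert hnotmem,
      show n - 1 + (v + 1) = n + v by ring]
    linear_combination (1 - q^(n+(v+1))) * ih

/-- the non-terminating rational solution, for the dominated configuration. -/
lemma infinite_sol (hq0 : q ≠ 0) (hqru : ∀ m : ℕ, 0 < m → q ^ m ≠ 1)
    {m₁ m₂ zin zout : ℤ} (hm : m₁ < m₂) (hzin : zin ≤ m₂) (hzout : zout ≤ m₁)
    (hB2 : ∀ n : ℤ, Bq q c n = (1 - q^(n + -m₁)) * (1 - q^(n + -m₂)))
    (hA2 : ∀ n : ℤ, Aq q a b n = (1 - q^(n + -zin)) * (1 - q^(n + -zout))) :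
    ∃ v : RatFunc ℂ, basicHypergeometricEq q a b c v ∧ dc v m₁ = 0 ∧ dc v m₂ ≠ 0 := by
  set M : Multiset ℤ := (Finset.Ioc (-m₂) (-zin)).val + (Finset.Ioc (-m₁) (-zout)).val with hM
  obtain ⟨y, hy⟩ := exists_prod_series hq0 m₂ M
  have hsplit : ∀ n : ℤ, ((M.map fun j => 1 - q ^ (n + j)).prod)
      = (∏ j ∈ Finset.Ioc (-m₂) (-zin), (1 - q^(n+j)))
        * (∏ j ∈ Finset.Ioc (-m₁) (-zout), (1 - q^(n+j))) := by
    intro n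
    rw [hM, Multiset.map_add, Multiset.prod_add]
    rfl
  have hkey : ∀ n : ℤ, Bq q c n * ((M.map fun j => 1 - q ^ (n + j)).prod)
      = Aq q a b n * ((M.map fun j => 1 - q ^ (n - 1 + j)).prod) := by
    intro n
    rw [hB2, hA2, hsplit n, hsplit (n-1)]
    have p1 := pair_step q n (-m₂) (-zin) (by omega)
    have p2 := pair_step q n (-m₁) (-zout) (by omega)
    have h12 : ((1 - q^(n + -m₂)) * (∏ j ∈ Finset.Ioc (-m₂) (-zin), (1 - q^(n+j))))
        * ((1 - q^(n + -m₁)) * (∏ j ∈ Finset.Ioc (-m₁) (-zout), (1 - q^(n+j))))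
        = ((1 - q^(n + -zin)) * (∏ j ∈ Finset.Ioc (-m₂) (-zin), (1 - q^(n-1+j))))
        * ((1 - q^(n + -zout)) * (∏ j ∈ Finset.Ioc (-m₁) (-zout), (1 - q^(n-1+j)))) := by
      rw [p1, p2]
    linear_combination h12
  refine ⟨y, ?_, ?_, ?_⟩
  · rw [sol_iff hq0]
    intro n
    rw [hy n, hy (n-1)]
    rcases lt_trichotomy n m₂ with h | h | h
    · rw [if_neg (by omega), if_neg (by omega), mul_zero, mul_zero]
    · subst h
      rw [if_pos le_rfl, if_neg (by omega), mul_zero, hB2]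
      have hz : (1:ℂ) - q^(n + -n) = 0 := by
        rw [show n + -n = (0:ℤ) by ring, zpow_zero, sub_self]
      rw [hz, mul_zero, zero_mul]
    · rw [if_pos (by omega), if_pos (by omega)]
      exact hkey n
  · rw [hy m₁, if_neg (by omega)]
  · rw [hy m₂, if_pos le_rfl]
    rw [hsplit]
    apply mul_ne_zero <;>
    · rw [Finset.prod_ne_zero_iff]
      intro j hj
      rw [Finset.mem_Ioc] at hj
      rw [sub_ne_zero]
      intro h1
      have := (zpow_eq_one_iff hq0 hqru).mp h1.symm
      omega

lemma zpow_congr (q : ℂ) {s t : ℤ} (h : s = t) : q ^ s = q ^ t := by rw [h]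

/-- The backward direction of the main theorem. -/
lemma backward (hq0 : q ≠ 0) (hqru : ∀ m : ℕ, 0 < m → q ^ m ≠ 1) {α β γ : ℤ}
    (ha : a = q ^ α) (hb : b = q ^ β) (hc : c = q ^ γ)
    (h1 : (α, α + 1 - γ) ∈ zSet ∨ (β, β + 1 - γ) ∈ zSet)
    (h2 : (α, β) ∈ zSet ∨ (α + 1 - γ, β + 1 - γ) ∈ zSet) :
    ∃ y₁ y₂ : RatFunc ℂ, basicHypergeometricEq q a b c y₁ ∧ basicHypergeometricEq q a b c y₂ ∧
      LinearIndependent ℂ ![y₁, y₂] := by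
  simp only [zSet_iff] at h1 h2
  have hγ : γ ≠ 1 := by omega
  obtain ⟨m₁, m₂, hm, hOR⟩ : ∃ m₁ m₂ : ℤ, m₁ < m₂ ∧
      ((m₁ = 0 ∧ m₂ = 1 - γ) ∨ (m₁ = 1 - γ ∧ m₂ = 0)) := by
    rcases lt_or_gt_of_ne hγ with h | h
    · exact ⟨0, 1 - γ, by omega, Or.inl ⟨rfl, rfl⟩⟩
    · exact ⟨1 - γ, 0, by omega, Or.inr ⟨rfl, rfl⟩⟩
  have hBiff : ∀ n, Bq q c n = 0 ↔ (n = m₁ ∨ n = m₂) := by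
    intro n
    rw [Bq_zero_iff hq0 hqru hc]
    rcases hOR with ⟨e1, e2⟩ | ⟨e1, e2⟩ <;> omega
  obtain ⟨zin, zout, hzpair, hin1, hin2, hout⟩ : ∃ zin zout : ℤ,
      ((zin = 1-α ∧ zout = 1-β) ∨ (zin = 1-β ∧ zout = 1-α)) ∧ m₁ < zin ∧ zin ≤ m₂
        ∧ (m₂ < zout ∨ zout ≤ m₁) := by
    by_cases hA : m₁ < 1 - α ∧ 1 - α ≤ m₂
    · refine ⟨1-α, 1-β, Or.inl ⟨rfl, rfl⟩, hA.1, hA.2, ?_⟩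
      rcases hOR with ⟨e1, e2⟩ | ⟨e1, e2⟩ <;> omega
    · refine ⟨1-β, 1-α, Or.inr ⟨rfl, rfl⟩, ?_, ?_, ?_⟩ <;>
        (rcases hOR with ⟨e1, e2⟩ | ⟨e1, e2⟩ <;> omega)
  have hAiff : ∀ n, Aq q a b n = 0 ↔ (n = zin ∨ n = zout) := by
    intro n
    rw [Aq_zero_iff hq0 hqru ha hb]
    rcases hzpair with ⟨e1, e2⟩ | ⟨e1, e2⟩ <;> omega
  obtain ⟨u, hu_sol, hu⟩ := window_sol hq0 (m := m₁) (t := zin) hin1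
    ((hBiff m₁).mpr (Or.inl rfl))
    (fun k hk1 hk2 => by rw [ne_eq, hBiff]; omega)
    ((hAiff zin).mpr (Or.inl rfl))
  have hum₁ : dc u m₁ = 1 := by rw [hu m₁, if_pos ⟨le_rfl, by omega⟩, wseq_self]
  have hum₂ : dc u m₂ = 0 := by rw [hu m₂, if_neg (by omega)]
  have hv : ∃ v, basicHypergeometricEq q a b c v ∧ dc v m₁ = 0 ∧ dc v m₂ ≠ 0 := by
    rcases hout with hout | hout
    · obtain ⟨v, hv_sol, hv⟩ := window_sol hq0 (m := m₂) (t := zout) hout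
        ((hBiff m₂).mpr (Or.inr rfl))
        (fun k hk1 hk2 => by rw [ne_eq, hBiff]; omega)
        ((hAiff zout).mpr (Or.inr rfl))
      refine ⟨v, hv_sol, ?_, ?_⟩
      · rw [hv m₁, if_neg (by omega)]
      · rw [hv m₂, if_pos ⟨le_rfl, by omega⟩, wseq_self]
        exact one_ne_zero
    · have hA2 : ∀ n : ℤ, Aq q a b n = (1 - q^(n + -zin)) * (1 - q^(n + -zout)) := by
        intro n
        rw [Aq, ha, hb, qpow_mul_qpow hq0 hqru α, qpow_mul_qpow hq0 hqru β,
          zpow_congr q (show α + n - 1 = n + -(1-α) by ring),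
          zpow_congr q (show β + n - 1 = n + -(1-β) by ring)]
        rcases hzpair with ⟨e1, e2⟩ | ⟨e1, e2⟩ <;> rw [e1, e2] <;> ring
      have hB2 : ∀ n : ℤ, Bq q c n = (1 - q^(n + -m₁)) * (1 - q^(n + -m₂)) := by
        intro n
        rw [Bq, hc, qpow_mul_qpow hq0 hqru γ,
          zpow_congr q (show γ + n - 1 = n + -(1-γ) by ring),
          zpow_congr q (show (n:ℤ) = n + -(0:ℤ) by ring)]
        rcases hOR with ⟨e1, e2⟩ | ⟨e1, e2⟩ <;> rw [e1, e2] <;> ring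
      exact infinite_sol hq0 hqru hm hin2 hout hB2 hA2
  obtain ⟨v, hv_sol, hvm₁, hvm₂⟩ := hv
  refine ⟨u, v, hu_sol, hv_sol, ?_⟩
  rw [LinearIndependent.pair_iff]
  intro s t hst
  have h₁ : dc (s • u + t • v) m₁ = 0 := by
    rw [hst, dc, RatFunc.coe_zero, HahnSeries.coeff_zero]
  have h₂ : dc (s • u + t • v) m₂ = 0 := by
    rw [hst, dc, RatFunc.coe_zero, HahnSeries.coeff_zero]
  rw [dc_comb, hum₁, hvm₁, mul_one, mul_zero, add_zero] at h₁
  rw [dc_comb, hum₂, mul_zero, zero_add] at h₂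
  exact ⟨h₁, (mul_eq_zero.mp h₂).resolve_right hvm₂⟩

end Backward

end QHyp

/-- The q-analogue of Schwarz's list: rational solutions of the basic hypergeometric
equation. -/
theorem basic_hypergeometric_rational_solutions_iff
    (q : ℂ) (hq0 : q ≠ 0) (hqru : ∀ m : ℕ, 0 < m → q ^ m ≠ 1)
    (a b c : ℂ) (hac : ¬(a = 0 ∧ c = 0)) (hbc : ¬(b = 0 ∧ c = 0)) :
    (∃ y₁ y₂ : RatFunc ℂ, basicHypergeometricEq q a b c y₁ ∧ basicHypergeometricEq q a b c y₂ ∧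
        LinearIndependent ℂ ![y₁, y₂]) ↔
      ∃ α β γ : ℤ, a = q ^ α ∧ b = q ^ β ∧ c = q ^ γ ∧
        ((α, α + 1 - γ) ∈ zSet ∨ (β, β + 1 - γ) ∈ zSet) ∧
        ((α, β) ∈ zSet ∨ (α + 1 - γ, β + 1 - γ) ∈ zSet) := by
  constructor
  · rintro ⟨y₁, y₂, hy₁, hy₂, hli⟩
    exact QHyp.forward hq0 hqru hy₁ hy₂ hli
  · rintro ⟨α, β, γ, ha, hb, hc, h1, h2⟩
    exact QHyp.backward hq0 hqru ha hb hc h1 h2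
end
end
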